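/- arXiv:1203.2590 — 5 statements merged into one kernel-verified Lean document; each statement's English description precedes it below -/
import Mathlib

section
/- Let y : [0,∞) → ℝ be C¹ with y(0) = ẙ > 0, and suppose y'(r) ≤ -m(r)/r² for all r > 0, where m(r) = 4π ∫₀ʳ s^(2+2l) g(y(s)) ds, g is continuous and increasing with g(z) = 0 for z ≤ 0 and g(z) > 0 for z > 0, and l > -1/2. If the limit y_∞ := lim_{r→∞} y(r) is strictly positive, then one obtains a contradiction; i.e., it is impossible that inf_{r≥0} y(r) > 0. -/
open Real MeasureTheory Set Filter

theorem stmt0 (l : ℝ) (hl : -1/2 < l) (g : ℝ → ℝ)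
    (hgc : Continuous g) (hgmono : Monotone g)
    (hg0 : ∀ z ≤ (0:ℝ), g z = 0) (hgpos : ∀ z > (0:ℝ), 0 < g z)
    (y y' : ℝ → ℝ)
    (hy : ∀ r ∈ Ici (0:ℝ), HasDerivAt y (y' r) r)
    (hy'c : ContinuousOn y' (Ici 0))
    (hy0 : 0 < y 0)
    (hineq : ∀ r > (0:ℝ),
      y' r ≤ -(4 * π * ∫ s in (0:ℝ)..r, s ^ (2 + 2*l) * g (y s)) / r ^ 2) :
    ¬ ∃ ε > (0:ℝ), ∀ r ≥ (0:ℝ), ε ≤ y r := by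
  rintro ⟨ε, hε, hεy⟩
  set c := g ε with hc
  have hcpos : 0 < c := hgpos ε hε
  have hycont : ContinuousOn y (Ici 0) :=
    fun r hr => ((hy r hr).continuousAt).continuousWithinAt
  have hgnn : ∀ z, 0 ≤ g z := by
    intro z
    rcases le_or_gt z 0 with h | h
    · rw [hg0 z h]
    · rw [← hg0 0 le_rfl]; exact hgmono h.le
  have hgy : ∀ s, 0 ≤ s → c ≤ g (y s) := fun s hs => hgmono (hεy s hs)
  have hexp : (0:ℝ) ≤ 2 + 2*l := by linarith
  have hfc : ContinuousOn (fun s : ℝ => s ^ (2 + 2*l) * g (y s)) (Ici 0) := by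
    apply ContinuousOn.mul
    · exact ContinuousOn.rpow_const continuousOn_id (fun x _ => Or.inr hexp)
    · exact hgc.comp_continuousOn hycont
  -- derivative bound for r ≥ 4
  have key : ∀ r, 4 ≤ r → y' r ≤ -(2*π*c) / r := by
    intro r hr
    have hr0 : (0:ℝ) < r := by linarith
    have hI02 : IntervalIntegrable (fun s : ℝ => s ^ (2+2*l) * g (y s)) volume 0 2 := by
      apply (hfc.mono _).intervalIntegrable
      rw [uIcc_of_le (by norm_num : (0:ℝ) ≤ 2)]
      exact Icc_subset_Ici_self
    have hI2r : IntervalIntegrable (fun s : ℝ => s ^ (2+2*l) * g (y s)) volume 2 r := by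
      apply (hfc.mono _).intervalIntegrable
      rw [uIcc_of_le (by linarith : (2:ℝ) ≤ r)]
      exact fun x hx => le_trans (by norm_num) hx.1
    have hsplit : (∫ s in (0:ℝ)..r, s ^ (2+2*l) * g (y s))
        = (∫ s in (0:ℝ)..2, s ^ (2+2*l) * g (y s))
          + ∫ s in (2:ℝ)..r, s ^ (2+2*l) * g (y s) :=
      (intervalIntegral.integral_add_adjacent_intervals hI02 hI2r).symm
    have h1 : 0 ≤ ∫ s in (0:ℝ)..2, s ^ (2+2*l) * g (y s) := by
      apply intervalIntegral.integral_nonneg (by norm_num)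
      intro u hu
      exact mul_nonneg (Real.rpow_nonneg hu.1 _) (hgnn _)
    have h2 : c * (r - 2) ≤ ∫ s in (2:ℝ)..r, s ^ (2+2*l) * g (y s) := by
      have : (∫ s in (2:ℝ)..r, c) ≤ ∫ s in (2:ℝ)..r, s ^ (2+2*l) * g (y s) := by
        apply intervalIntegral.integral_mono_on (by linarith) intervalIntegrable_const hI2r
        intro u hu
        have hu1 : (1:ℝ) ≤ u := by linarith [hu.1]
        have hu0 : (0:ℝ) ≤ u := by linarith
        have h1u : (1:ℝ) ≤ u ^ (2+2*l) := Real.one_le_rpow hu1 hexp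
        calc c = 1 * c := (one_mul c).symm
        _ ≤ u ^ (2+2*l) * g (y u) :=
          mul_le_mul h1u (hgy u hu0) hcpos.le (by linarith)
      simpa [mul_comm] using this
    have hIlb : c * (r - 2) ≤ ∫ s in (0:ℝ)..r, s ^ (2+2*l) * g (y s) := by
      rw [hsplit]; linarith
    have := hineq r hr0
    have hπ := Real.pi_pos
    have hstep : -(4 * π * ∫ s in (0:ℝ)..r, s ^ (2+2*l) * g (y s)) / r ^ 2
        ≤ -(2*π*c) / r := by
      rw [div_le_div_iff₀ (by positivity) hr0]
      have h3 : 4 * π * (c * (r-2)) ≤ 4 * π * ∫ s in (0:ℝ)..r, s ^ (2+2*l) * g (y s) := by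
        apply mul_le_mul_of_nonneg_left hIlb (by positivity)
      nlinarith [mul_le_mul_of_nonneg_right h3 hr0.le,
        mul_nonneg (mul_pos hπ hcpos).le (show (0:ℝ) ≤ 2*r^2 - 8*r by nlinarith)]
    linarith
  -- choose large R and integrate
  set R : ℝ := 4 * Real.exp ((y 4 - ε)/(2*π*c) + 1) with hR
  have hπ := Real.pi_pos
  have hy4 : ε ≤ y 4 := hεy 4 (by norm_num)
  have hexppos : (1:ℝ) ≤ (y 4 - ε)/(2*π*c) + 1 := by
    have : 0 ≤ (y 4 - ε)/(2*π*c) := div_nonneg (by linarith) (by positivity)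
    linarith
  have hR4 : (4:ℝ) ≤ R := by
    have : (1:ℝ) ≤ Real.exp ((y 4 - ε)/(2*π*c) + 1) := Real.one_le_exp (by linarith)
    nlinarith
  have hftc : y R - y 4 = ∫ r in (4:ℝ)..R, y' r := by
    symm
    apply intervalIntegral.integral_eq_sub_of_hasDerivAt
    · intro x hx
      rw [uIcc_of_le hR4] at hx
      exact hy x (by simp only [mem_Ici]; linarith [hx.1])
    · apply (hy'c.mono _).intervalIntegrable
      rw [uIcc_of_le hR4]
      exact fun x hx => le_trans (by norm_num) hx.1
  have hintmono : (∫ r in (4:ℝ)..R, y' r) ≤ ∫ r in (4:ℝ)..R, -(2*π*c)/r := by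
    apply intervalIntegral.integral_mono_on hR4
    · apply (hy'c.mono _).intervalIntegrable
      rw [uIcc_of_le hR4]
      exact fun x hx => le_trans (by norm_num) hx.1
    · apply ContinuousOn.intervalIntegrable
      apply ContinuousOn.div continuousOn_const continuousOn_id
      intro x hx
      simp only [id_eq]
      rw [uIcc_of_le hR4] at hx
      intro h; rw [h] at hx; linarith [hx.1]
    · exact fun x hx => key x hx.1
  have hval : (∫ r in (4:ℝ)..R, -(2*π*c)/r) = -(2*π*c) * Real.log (R/4) := by
    have h0 : (0:ℝ) ∉ Set.uIcc 4 R := by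
      rw [uIcc_of_le hR4]
      intro h
      linarith [h.1]
    have : (∫ r in (4:ℝ)..R, -(2*π*c)/r) = -(2*π*c) * ∫ r in (4:ℝ)..R, 1/r := by
      rw [← intervalIntegral.integral_const_mul]
      congr 1; funext r; ring
    rw [this, integral_one_div h0]
  have hlogR : Real.log (R/4) = (y 4 - ε)/(2*π*c) + 1 := by
    rw [show R/4 = Real.exp ((y 4 - ε)/(2*π*c) + 1) from by rw [hR]; ring, Real.log_exp]
  have hfinal : y R ≤ y 4 - (2*π*c) * ((y 4 - ε)/(2*π*c) + 1) := by
    rw [hval, hlogR] at hintmono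
    linarith
  have h2πc : (2*π*c) ≠ 0 := by positivity
  rw [mul_add, mul_div_cancel₀ _ h2πc] at hfinal
  have := hεy R (by linarith)
  nlinarith
end

section
/- (Compact-support lemma) Let y ∈ C¹([0,∞)) with y(0) = ẙ ∈ (0, y_max) satisfy y'(r) ≤ -m(r)/r² on (0,∞), where m(r) = 4π ∫₀ʳ s^(2+2l) g(y(s)) ds, g ∈ C((-∞, y_max)) is increasing with g = 0 on (-∞,0] and g > 0 on (0, y_max), and l > -1/2. Assume g(z) ≥ c z^(n+l) for 0 < z < z* with constants c > 0, z* > 0, and 0 < n < 3 + l. Then y has a unique zero: there exists a unique R > 0 with y(R) = 0. -/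
open Real MeasureTheory Set Filter

lemma blowdown {W W' : ℝ → ℝ} {a K μ : ℝ} (ha : 0 < a) (hK : 0 < K) (hμ : -1 < μ)
    (hd : ∀ r ∈ Ici a, HasDerivAt W (W' r) r)
    (hW'c : ContinuousOn W' (Ici a))
    (hW' : ∀ r ∈ Ici a, W' r ≤ -K * r ^ μ)
    (hWpos : ∀ r ∈ Ici a, 0 < W r) : False := by
  have hμ1 : 0 < μ + 1 := by linarith
  set X : ℝ := a ^ (μ+1) + (μ+1) * W a / K + 1 with hXdef
  have hapow : 0 < a ^ (μ+1) := Real.rpow_pos_of_pos ha _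
  have hWa : 0 < W a := hWpos a (mem_Ici.2 le_rfl)
  have hX : 0 < X := by positivity
  set r : ℝ := X ^ (μ+1)⁻¹ with hrdef
  have hrX : r ^ (μ+1) = X := Real.rpow_inv_rpow hX.le hμ1.ne'
  have har : a < r := by
    have h1 : a ^ (μ+1) < r ^ (μ+1) := by
      rw [hrX, hXdef]
      have : 0 < (μ+1) * W a / K := by positivity
      linarith
    by_contra h
    have hr0 : (0:ℝ) ≤ r := Real.rpow_nonneg hX.le _
    exact absurd (Real.rpow_le_rpow hr0 (not_lt.1 h) hμ1.le) (not_le.2 h1)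
  have hIcc : Set.uIcc a r ⊆ Ici a := by
    rw [Set.uIcc_of_le har.le]; exact fun x hx => hx.1
  have hWint : IntervalIntegrable W' volume a r :=
    (hW'c.mono hIcc).intervalIntegrable
  have hgc : ContinuousOn (fun s : ℝ => -K * s ^ μ) (Set.uIcc a r) := by
    apply ContinuousOn.mul continuousOn_const
    apply ContinuousOn.rpow_const continuousOn_id
    intro x hx
    exact Or.inl (ne_of_gt (lt_of_lt_of_le ha (hIcc hx)))
  have hgint : IntervalIntegrable (fun s : ℝ => -K * s ^ μ) volume a r := hgc.intervalIntegrable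
  have hftc : ∫ s in a..r, W' s = W r - W a :=
    intervalIntegral.integral_eq_sub_of_hasDerivAt (fun t ht => hd t (hIcc ht)) hWint
  have hmono : ∫ s in a..r, W' s ≤ ∫ s in a..r, -K * s ^ μ :=
    intervalIntegral.integral_mono_on har.le hWint hgint (fun x hx => hW' x hx.1)
  have hval : ∫ s in a..r, -K * s ^ μ = -K * ((r ^ (μ+1) - a ^ (μ+1)) / (μ+1)) := by
    rw [intervalIntegral.integral_const_mul, integral_rpow (Or.inl hμ)]
  have hWr : 0 < W r := hWpos r (mem_Ici.2 har.le)
  rw [hftc, hval, hrX] at hmono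
  have key : -K * ((X - a ^ (μ+1)) / (μ+1)) = -(W a + K/(μ+1)) := by
    rw [hXdef]; field_simp; ring
  rw [key] at hmono
  have : 0 < K / (μ+1) := div_pos hK hμ1
  linarith

set_option maxHeartbeats 2000000 in
theorem stmt1 (l n c zstar : ℝ) (hl : -1/2 < l) (hn0 : 0 < n) (hn3 : n < 3 + l)
    (hc : 0 < c) (hzs : 0 < zstar)
    (ymax : EReal) (g : ℝ → ℝ)
    (hgc : ContinuousOn g {z : ℝ | (z : EReal) < ymax})
    (hgmono : MonotoneOn g {z : ℝ | (z : EReal) < ymax})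
    (hg0 : ∀ z ≤ (0:ℝ), g z = 0)
    (hgpos : ∀ z : ℝ, 0 < z → (z : EReal) < ymax → 0 < g z)
    (hgrow : ∀ z : ℝ, 0 < z → z < zstar → c * z ^ (n + l) ≤ g z)
    (y y' : ℝ → ℝ) (ya : ℝ) (hya : 0 < ya) (hyamax : (ya : EReal) < ymax)
    (hy0 : y 0 = ya)
    (hy : ∀ r ∈ Ici (0:ℝ), HasDerivAt y (y' r) r)
    (hy'c : ContinuousOn y' (Ici 0))
    (hineq : ∀ r > (0:ℝ),
      y' r ≤ -(4 * π * ∫ s in (0:ℝ)..r, s ^ (2 + 2*l) * g (y s)) / r ^ 2) :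
    ∃! R : ℝ, 0 < R ∧ y R = 0 := by
  have hπ : (0:ℝ) < π := Real.pi_pos
  set E : ℝ := 2 + 2*l with hEdef
  have hE1 : 1 < E := by rw [hEdef]; linarith
  have hE0 : 0 < E := by linarith
  have hE1' : (0:ℝ) < E + 1 := by linarith
  set D : Set ℝ := {z : ℝ | (z : EReal) < ymax} with hDdef
  have hDopen : IsOpen D := isOpen_Iio.preimage continuous_coe_real_ereal
  have hmemD : ∀ z : ℝ, z ≤ ya → z ∈ D := by
    intro z hz
    exact lt_of_le_of_lt (EReal.coe_le_coe_iff.2 hz) hyamax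
  have hyaD : ya ∈ D := hmemD ya le_rfl
  have hycont : ContinuousOn y (Ici 0) :=
    fun r hr => ((hy r hr).continuousAt).continuousWithinAt
  -- step: y bounded above by ya
  have claim : ∀ b : ℝ, ya < b → (b : EReal) < ymax → ∀ r, 0 ≤ r → y r < b := by
    intro b hb1 hb2
    by_contra hcon
    push_neg at hcon
    obtain ⟨r1, hr1, hr1b⟩ := hcon
    have hAclosed : IsClosed (Ici 0 ∩ y ⁻¹' (Ici b)) :=
      hycont.preimage_isClosed_of_isClosed isClosed_Ici isClosed_Ici
    have hAne : (Ici 0 ∩ y ⁻¹' (Ici b)).Nonempty := ⟨r1, hr1, hr1b⟩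
    have hAbdd : BddBelow (Ici 0 ∩ y ⁻¹' (Ici b)) := ⟨0, fun x hx => hx.1⟩
    set T := sInf (Ici 0 ∩ y ⁻¹' (Ici b)) with hT
    have hTA : T ∈ Ici 0 ∩ y ⁻¹' (Ici b) := hAclosed.csInf_mem hAne hAbdd
    have hT0 : 0 ≤ T := hTA.1
    have hTy : b ≤ y T := hTA.2
    have hTpos : 0 < T := by
      rcases lt_or_eq_of_le hT0 with h | h
      · exact h
      · exfalso; rw [← h, hy0] at hTy; linarith
    have hless : ∀ s, 0 ≤ s → s < T → y s < b := by
      intro s hs hsT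
      by_contra hsb
      exact absurd (csInf_le hAbdd ⟨hs, not_lt.1 hsb⟩) (not_le.2 hsT)
    have hgy0 : ∀ s, 0 ≤ s → s < T → 0 ≤ g (y s) := by
      intro s hs hsT
      rcases le_or_gt (y s) 0 with h | h
      · rw [hg0 _ h]
      · exact (hgpos _ h (lt_trans (EReal.coe_lt_coe_iff.2 (hless s hs hsT)) hb2)).le
    have hy'neg : ∀ x ∈ Ioo 0 T, deriv y x ≤ 0 := by
      intro x hx
      rw [(hy x hx.1.le).deriv]
      have hm : 0 ≤ ∫ s in (0:ℝ)..x, s ^ E * g (y s) := by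
        apply intervalIntegral.integral_nonneg hx.1.le
        intro u hu
        have h1 := hgy0 u hu.1 (lt_of_le_of_lt hu.2 hx.2)
        have h2 : (0:ℝ) ≤ u ^ E := Real.rpow_nonneg hu.1 _
        positivity
      have h3 := hineq x hx.1
      refine le_trans h3 ?_
      apply div_nonpos_of_nonpos_of_nonneg
      · simp only [neg_nonpos]; positivity
      · positivity
    have hanti : AntitoneOn y (Icc 0 T) := by
      apply antitoneOn_of_deriv_nonpos (convex_Icc 0 T)
        (hycont.mono (Icc_subset_Ici_self))
      · intro x hx
        rw [interior_Icc] at hx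
        exact (hy x hx.1.le).differentiableAt.differentiableWithinAt
      · intro x hx
        rw [interior_Icc] at hx
        exact hy'neg x hx
    have := hanti (left_mem_Icc.2 hT0) (right_mem_Icc.2 hT0) hT0
    rw [hy0] at this
    linarith
  have ybound : ∀ r, 0 ≤ r → y r ≤ ya := by
    intro r hr
    by_contra h
    push_neg at h
    obtain ⟨b, hb1, hb2⟩ : ∃ b : ℝ, ya < b ∧ (b : EReal) < ymax := by
      obtain ⟨q, hq1, hq2⟩ := exists_between hyamax
      have hqt : q ≠ ⊤ := (hq2.trans_le le_top).ne
      have hqb : q ≠ ⊥ := ne_bot_of_gt hq1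
      lift q to ℝ using ⟨hqt, hqb⟩
      exact ⟨q, EReal.coe_lt_coe_iff.1 hq1, hq2⟩
    have := claim (min b (y r)) (lt_min hb1 h) (lt_of_le_of_lt (EReal.coe_le_coe_iff.2 (min_le_left _ _)) hb2) r hr
    exact absurd (min_le_right b (y r)) (not_le.2 this)
  have hyD : ∀ r, 0 ≤ r → y r ∈ D := fun r hr => hmemD _ (ybound r hr)
  have hgynn : ∀ s, 0 ≤ s → 0 ≤ g (y s) := by
    intro s hs
    rcases le_or_gt (y s) 0 with h | h
    · rw [hg0 _ h]
    · exact (hgpos _ h (hyD s hs)).le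
  -- integrand continuity & integrability
  have hfcont : ContinuousOn (fun s : ℝ => s ^ E * g (y s)) (Ici 0) := by
    apply ContinuousOn.mul
    · exact fun x hx => (Real.continuousAt_rpow_const x E (Or.inr hE0.le)).continuousWithinAt
    · exact hgc.comp hycont (fun s hs => hyD s hs)
  have hfint : ∀ a b : ℝ, 0 ≤ a → 0 ≤ b →
      IntervalIntegrable (fun s : ℝ => s ^ E * g (y s)) volume a b := by
    intro a b ha hb
    apply (hfcont.mono ?_).intervalIntegrable
    intro x hx
    exact le_trans (le_min ha hb) hx.1
  set M : ℝ → ℝ := fun r => 4 * π * ∫ s in (0:ℝ)..r, s ^ E * g (y s) with hM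
  have hineq' : ∀ r, 0 < r → y' r ≤ -(M r) / r ^ 2 := by
    intro r hr; simpa only [hM] using hineq r hr
  have Mnn : ∀ r, 0 ≤ r → 0 ≤ M r := by
    intro r hr
    simp only [hM]
    have : 0 ≤ ∫ s in (0:ℝ)..r, s ^ E * g (y s) := by
      apply intervalIntegral.integral_nonneg hr
      intro u hu
      have := hgynn u hu.1
      have h2 : (0:ℝ) ≤ u ^ E := Real.rpow_nonneg hu.1 _
      positivity
    positivity
  have Mmono : ∀ r s, 0 ≤ r → r ≤ s → M r ≤ M s := by
    intro r s hr hrs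
    simp only [hM]
    have hsplit : (∫ u in (0:ℝ)..r, u ^ E * g (y u)) + (∫ u in r..s, u ^ E * g (y u))
        = ∫ u in (0:ℝ)..s, u ^ E * g (y u) :=
      intervalIntegral.integral_add_adjacent_intervals (hfint 0 r le_rfl hr)
        (hfint r s hr (hr.trans hrs))
    have h2 : 0 ≤ ∫ u in r..s, u ^ E * g (y u) := by
      apply intervalIntegral.integral_nonneg hrs
      intro u hu
      have := hgynn u (hr.trans hu.1)
      have h2 : (0:ℝ) ≤ u ^ E := Real.rpow_nonneg (hr.trans hu.1) _
      positivity
    nlinarith [hπ]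
  have Mpos : ∀ r, 0 < r → 0 < M r := by
    intro r hr
    obtain ⟨δ, hδ0, hδ⟩ : ∃ δ > 0, ∀ s, 0 ≤ s → s ≤ δ → ya/2 < y s := by
      have hcy : ContinuousAt y 0 := (hy 0 (mem_Ici.2 le_rfl)).continuousAt
      have : y ⁻¹' (Ioi (ya/2)) ∈ nhds (0:ℝ) := by
        apply hcy.preimage_mem_nhds
        apply Ioi_mem_nhds
        rw [hy0]; linarith
      obtain ⟨δ, hδ0, hδ⟩ := Metric.mem_nhds_iff.1 this
      refine ⟨δ/2, by linarith, fun s hs1 hs2 => ?_⟩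
      apply hδ
      rw [Metric.mem_ball, Real.dist_eq, sub_zero, abs_of_nonneg hs1]
      linarith
    set r' := min δ r with hr'
    have hr'0 : 0 < r' := lt_min hδ0 hr
    have hr'r : r' ≤ r := min_le_right _ _
    have key : 4 * π * (g (ya/2) * (r' ^ (E+1) / (E+1))) ≤ M r := by
      simp only [hM]
      have hsplit : (∫ u in (0:ℝ)..r', u ^ E * g (y u)) + (∫ u in r'..r, u ^ E * g (y u))
          = ∫ u in (0:ℝ)..r, u ^ E * g (y u) :=
        intervalIntegral.integral_add_adjacent_intervals (hfint 0 r' le_rfl hr'0.le)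
          (hfint r' r hr'0.le hr.le)
      have h2 : 0 ≤ ∫ u in r'..r, u ^ E * g (y u) := by
        apply intervalIntegral.integral_nonneg hr'r
        intro u hu
        have := hgynn u (hr'0.le.trans hu.1)
        have h2 : (0:ℝ) ≤ u ^ E := Real.rpow_nonneg (hr'0.le.trans hu.1) _
        positivity
      have h1 : g (ya/2) * (r' ^ (E+1) / (E+1)) ≤ ∫ u in (0:ℝ)..r', u ^ E * g (y u) := by
        have hlow : ∫ u in (0:ℝ)..r', u ^ E * g (ya/2) ≤ ∫ u in (0:ℝ)..r', u ^ E * g (y u) := by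
          apply intervalIntegral.integral_mono_on hr'0.le
          · apply ContinuousOn.intervalIntegrable
            apply ContinuousOn.mul ?_ continuousOn_const
            intro x hx
            refine (Real.continuousAt_rpow_const x E (Or.inr hE0.le)).continuousWithinAt
          · exact hfint 0 r' le_rfl hr'0.le
          · intro u hu
            have hu0 : 0 ≤ u := hu.1
            have hyu : ya/2 < y u := hδ u hu.1 (le_trans hu.2 (min_le_left _ _))
            have hgle : g (ya/2) ≤ g (y u) :=
              hgmono (hmemD _ (by linarith)) (hyD u hu0) hyu.le
            have : (0:ℝ) ≤ u ^ E := Real.rpow_nonneg hu0 _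
            nlinarith
        have heval : ∫ u in (0:ℝ)..r', u ^ E * g (ya/2) = g (ya/2) * (r' ^ (E+1) / (E+1)) := by
          rw [intervalIntegral.integral_mul_const, integral_rpow (Or.inl (by linarith : (-1:ℝ) < E))]
          rw [Real.zero_rpow (by linarith : E + 1 ≠ 0)]
          ring
        rw [← heval]; exact hlow
      nlinarith [hπ]
    have hgya : 0 < g (ya/2) := hgpos _ (by linarith) (hmemD _ (by linarith))
    have : 0 < 4 * π * (g (ya/2) * (r' ^ (E+1) / (E+1))) := by
      have := Real.rpow_pos_of_pos hr'0 (E+1)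
      positivity
    linarith
  have hy'neg : ∀ r, 0 < r → y' r < 0 := by
    intro r hr
    refine lt_of_le_of_lt (hineq' r hr) ?_
    apply div_neg_of_neg_of_pos
    · simp only [neg_neg_iff_pos]
      linarith [Mpos r hr]
    · positivity
  have ystrict : StrictAntiOn y (Ici 0) := by
    apply strictAntiOn_of_deriv_neg (convex_Ici 0) hycont
    intro x hx
    rw [interior_Ici] at hx
    rw [(hy x (mem_Ici.2 (mem_Ioi.1 hx).le)).deriv]
    exact hy'neg x hx
  have hyle : ∀ r s, 0 ≤ r → r ≤ s → y s ≤ y r := by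
    intro r s hr hrs
    rcases eq_or_lt_of_le hrs with h | h
    · rw [h]
    · exact (ystrict (mem_Ici.2 hr) (mem_Ici.2 (hr.trans hrs)) h).le
  -- existence
  have hex : ∃ R : ℝ, 0 < R ∧ y R = 0 := by
    by_contra hno
    push_neg at hno
    have hpos : ∀ r, 0 ≤ r → 0 < y r := by
      intro r hr
      rcases eq_or_lt_of_le hr with h | h
      · rw [← h, hy0]; exact hya
      · rcases lt_trichotomy (y r) 0 with hlt | heq | hgt
        · exfalso
          have hIVT := intermediate_value_Ioo' h.le (hycont.mono (Icc_subset_Ici_self : Icc 0 r ⊆ Ici 0))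
          have h0mem : (0:ℝ) ∈ Ioo (y r) (y 0) := by
            constructor
            · exact hlt
            · rw [hy0]; exact hya
          obtain ⟨x, hx, hyx⟩ := hIVT h0mem
          exact hno x hx.1 hyx
        · exact absurd heq (hno r h)
        · exact hgt
    have hrpc : Continuous fun s : ℝ => s ^ E :=
      continuous_iff_continuousAt.2 fun x => Real.continuousAt_rpow_const x E (Or.inr hE0.le)
    set z1 := min zstar 1 with hz1
    have hz10 : 0 < z1 := lt_min hzs one_pos
    have hdivpow : ∀ r : ℝ, 0 < r → ∀ K' : ℝ, -(K' * r ^ (E+1)) / r ^ 2 = -(K' * r ^ (E-1)) := by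
      intro r hr K'
      have h1 : r ^ (E+1) = r ^ (E-1) * r ^ 2 := by
        rw [← Real.rpow_natCast r 2, ← Real.rpow_add hr]
        congr 1
        push_cast
        ring
      rw [h1, neg_div]
      congr 1
      field_simp
    by_cases hcase : ∃ r0, 0 < r0 ∧ y r0 < z1
    · -- hard case: y gets below z1
      obtain ⟨r0, hr00, hr0z⟩ := hcase
      have hp3 : n + l < E + 1 := by rw [hEdef]; linarith
      have hysmall : ∀ s, r0 ≤ s → y s < z1 :=
        fun s hs => lt_of_le_of_lt (hyle r0 s hr00.le hs) hr0z
      have glow : ∀ s, r0 ≤ s → ∀ q, n + l ≤ q → c * y s ^ q ≤ g (y s) := by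
        intro s hs q hq
        have hys0 : 0 < y s := hpos s (hr00.le.trans hs)
        have h1 : c * y s ^ (n+l) ≤ g (y s) :=
          hgrow _ hys0 (lt_of_lt_of_le (hysmall s hs) (min_le_left _ _))
        have h2 : y s ^ q ≤ y s ^ (n+l) :=
          Real.rpow_le_rpow_of_exponent_ge hys0
            ((hysmall s hs).le.trans (min_le_right _ _)) hq
        nlinarith
      rcases lt_or_ge (n + l) 1 with hplt | hpge
      · -- subcase p < 1
        set p' := max (n + l) (1/2) with hp'
        have hp'lt1 : p' < 1 := max_lt hplt (by norm_num)
        have hp'p : n + l ≤ p' := le_max_left _ _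
        have hp'0 : 0 < p' := lt_of_lt_of_le (by norm_num) (le_max_right _ _)
        set a := 2 * r0 with ha
        have ha0 : 0 < a := by positivity
        set K1 := 2 * π * c / (E+1) with hK1
        have hK1pos : 0 < K1 := by positivity
        have hyd : ∀ r, a ≤ r → y' r ≤ -(K1 * y r ^ p' * r ^ (E-1)) := by
          intro r hr
          have hr0r : 0 < r := lt_of_lt_of_le ha0 hr
          have hr0le : r0 ≤ r := by linarith
          have hyr0 : 0 < y r := hpos r hr0r.le
          -- M lower bound
          have hlow1 : (c * y r ^ p') * ((r ^ (E+1) - r0 ^ (E+1))/(E+1)) ≤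
              ∫ u in r0..r, u ^ E * g (y u) := by
            have hlow : ∫ u in r0..r, u ^ E * (c * y r ^ p') ≤ ∫ u in r0..r, u ^ E * g (y u) := by
              apply intervalIntegral.integral_mono_on hr0le
              · exact (hrpc.continuousOn.mul continuousOn_const).intervalIntegrable
              · exact hfint r0 r hr00.le hr0r.le
              · intro u hu
                have hu0 : 0 < u := lt_of_lt_of_le hr00 hu.1
                have hyu : 0 < y u := hpos u hu0.le
                have h2 : y r ^ p' ≤ y u ^ p' :=
                  Real.rpow_le_rpow hyr0.le (hyle u r hu0.le hu.2) hp'0.le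
                have h3 := glow u hu.1 p' hp'p
                have h4 : (0:ℝ) ≤ u ^ E := Real.rpow_nonneg hu0.le _
                have hstep : c * y r ^ p' ≤ g (y u) :=
                  le_trans (mul_le_mul_of_nonneg_left h2 hc.le) h3
                exact mul_le_mul_of_nonneg_left hstep h4
            have heval : ∫ u in r0..r, u ^ E * (c * y r ^ p')
                = (c * y r ^ p') * ((r ^ (E+1) - r0 ^ (E+1))/(E+1)) := by
              rw [intervalIntegral.integral_mul_const,
                integral_rpow (Or.inl (by linarith : (-1:ℝ) < E))]
              ring
            rw [← heval]; exact hlow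
          have hhalf : r0 ^ (E+1) ≤ r ^ (E+1) / 2 := by
            have h1 : r0 ≤ r / 2 := by linarith
            have h2 : r0 ^ (E+1) ≤ (r/2) ^ (E+1) :=
              Real.rpow_le_rpow hr00.le h1 (by linarith)
            have h3 : (r/2 : ℝ) ^ (E+1) = r ^ (E+1) / 2 ^ (E+1) :=
              Real.div_rpow hr0r.le (by norm_num : (0:ℝ) ≤ 2) (E+1)
            have h4 : (2:ℝ) ≤ 2 ^ (E+1) := by
              nth_rewrite 1 [← Real.rpow_one 2]
              apply Real.rpow_le_rpow_of_exponent_le (by norm_num) (by linarith)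
            have h5 : r ^ (E+1) / 2 ^ (E+1) ≤ r ^ (E+1) / 2 := by
              rw [div_le_div_iff₀ (by positivity) (by norm_num)]
              have h9 := Real.rpow_nonneg hr0r.le (E+1)
              nlinarith
            linarith
          have hMlow : K1 * y r ^ p' * r ^ (E+1) ≤ M r := by
            have hsplit : (∫ u in (0:ℝ)..r0, u ^ E * g (y u)) + (∫ u in r0..r, u ^ E * g (y u))
                = ∫ u in (0:ℝ)..r, u ^ E * g (y u) :=
              intervalIntegral.integral_add_adjacent_intervals (hfint 0 r0 le_rfl hr00.le)
                (hfint r0 r hr00.le hr0r.le)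
            have hfirst : 0 ≤ ∫ u in (0:ℝ)..r0, u ^ E * g (y u) := by
              apply intervalIntegral.integral_nonneg hr00.le
              intro u hu
              have := hgynn u hu.1
              have h2 : (0:ℝ) ≤ u ^ E := Real.rpow_nonneg hu.1 _
              positivity
            have hyp' : (0:ℝ) ≤ y r ^ p' := Real.rpow_nonneg hyr0.le _
            have hcomb : (c * y r ^ p') * ((r ^ (E+1) / 2)/(E+1)) ≤
                ∫ u in r0..r, u ^ E * g (y u) := by
              refine le_trans ?_ hlow1
              apply mul_le_mul_of_nonneg_left ?_ (by positivity)
              apply (div_le_div_iff_of_pos_right hE1').2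
              linarith
            simp only [hM]
            rw [← hsplit]
            have heq : K1 * y r ^ p' * r ^ (E+1)
                = 4 * π * ((c * y r ^ p') * ((r ^ (E+1) / 2)/(E+1))) := by
              rw [hK1]; field_simp; ring
            rw [heq]
            have h9 : (c * y r ^ p') * ((r ^ (E+1) / 2)/(E+1)) ≤
                (∫ u in (0:ℝ)..r0, u ^ E * g (y u)) + ∫ u in r0..r, u ^ E * g (y u) := by
              linarith
            exact mul_le_mul_of_nonneg_left h9 (by positivity)
          have h6 := hineq' r hr0r
          refine le_trans h6 ?_
          rw [← hdivpow r hr0r (K1 * y r ^ p')]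
          gcongr
        refine blowdown (a := a) (K := (1 - p') * K1) (μ := E - 1)
          (W := fun x => y x ^ (1 - p'))
          (W' := fun x => y' x * (1 - p') * y x ^ (1 - p' - 1))
          ha0 (by nlinarith) (by linarith)
          (fun r hr => (hy r (mem_Ici.2 (ha0.le.trans hr))).rpow_const
            (Or.inl (hpos r (ha0.le.trans hr)).ne'))
          ?_ ?_ (fun r hr => Real.rpow_pos_of_pos (hpos r (ha0.le.trans hr)) _)
        · apply ContinuousOn.mul
          · exact (hy'c.mono (fun x hx => ha0.le.trans hx)).mul continuousOn_const
          · exact (hycont.mono (fun x hx => ha0.le.trans hx)).rpow_const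
              (fun x hx => Or.inl (hpos x (ha0.le.trans hx)).ne')
        · intro r hr
          rw [mem_Ici] at hr
          have hyr0 : 0 < y r := hpos r (ha0.le.trans hr)
          have hyrp : y r ^ p' * y r ^ (1 - p' - 1) = 1 := by
            rw [← Real.rpow_add hyr0]; norm_num
          have h4 : y' r * ((1-p') * y r ^ (1-p'-1)) ≤
              (-(K1 * y r ^ p' * r ^ (E-1))) * ((1-p') * y r ^ (1-p'-1)) := by
            apply mul_le_mul_of_nonneg_right (hyd r hr)
            have := Real.rpow_pos_of_pos hyr0 (1-p'-1)
            nlinarith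
          calc y' r * (1-p') * y r ^ (1-p'-1) = y' r * ((1-p') * y r ^ (1-p'-1)) := by ring
            _ ≤ (-(K1 * y r ^ p' * r ^ (E-1))) * ((1-p') * y r ^ (1-p'-1)) := h4
            _ = -((1-p') * K1) * r ^ (E-1) * (y r ^ p' * y r ^ (1-p'-1)) := by ring
            _ = -((1-p') * K1) * r ^ (E-1) := by rw [hyrp, mul_one]
      · -- subcase p ≥ 1
        set p' := ((n + l) + (E + 1))/2 with hp'
        have hp'1 : 1 < p' := by rw [hp']; linarith
        have hp'p : n + l ≤ p' := by rw [hp']; linarith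
        have hp'E : p' < E + 1 := by rw [hp']; linarith
        have hp'0 : 0 < p' := by linarith
        have ystep : ∀ r, 0 < r → M r / (2*r) ≤ y r := by
          intro r hr
          have h2r : r ≤ 2*r := by linarith
          have hsub : Set.uIcc r (2*r) ⊆ Ici 0 := by
            rw [Set.uIcc_of_le h2r]
            exact fun x hx => le_trans hr.le hx.1
          have hftc2 : ∫ s in r..(2*r), y' s = y (2*r) - y r :=
            intervalIntegral.integral_eq_sub_of_hasDerivAt
              (fun t ht => hy t (hsub ht)) ((hy'c.mono hsub).intervalIntegrable)
          have hint2 : IntervalIntegrable (fun s : ℝ => -(M r) * s ^ ((-2):ℝ)) volume r (2*r) := by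
            apply ContinuousOn.intervalIntegrable
            apply ContinuousOn.mul continuousOn_const
            apply ContinuousOn.rpow_const continuousOn_id
            intro x hx
            exact Or.inl (ne_of_gt (lt_of_lt_of_le hr ((Set.uIcc_of_le h2r ▸ hx).1)))
          have hptw : ∀ s ∈ Icc r (2*r), y' s ≤ -(M r) * s ^ ((-2):ℝ) := by
            intro s hs
            have hs0 : 0 < s := lt_of_lt_of_le hr hs.1
            have h1 := hineq' s hs0
            have h2 : M r ≤ M s := Mmono r s hr.le hs.1
            have h3 : s ^ ((-2):ℝ) = (s^2)⁻¹ := by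
              rw [Real.rpow_neg hs0.le, ← Real.rpow_natCast s 2]; norm_num
            rw [h3]
            calc y' s ≤ -(M s)/s^2 := h1
              _ ≤ -(M r)/s^2 := by gcongr
              _ = -(M r) * (s^2)⁻¹ := by rw [div_eq_mul_inv]
          have hmono2 := intervalIntegral.integral_mono_on h2r
            ((hy'c.mono hsub).intervalIntegrable) hint2 hptw
          have heval2 : ∫ s in r..(2*r), -(M r) * s ^ ((-2):ℝ) = -(M r / (2*r)) := by
            rw [intervalIntegral.integral_const_mul,
              integral_rpow (Or.inr ⟨by norm_num, ?_⟩)]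
            · have h2r0 : (2*r) ≠ 0 := by positivity
              have hr0 : r ≠ 0 := hr.ne'
              rw [show ((-2):ℝ) + 1 = -1 by norm_num, Real.rpow_neg_one, Real.rpow_neg_one]
              field_simp
              ring
            · rw [Set.uIcc_of_le h2r]
              intro h
              exact absurd h.1 (not_le.2 hr)
          rw [hftc2, heval2] at hmono2
          have := hpos (2*r) (by linarith)
          linarith
        have Mderiv : ∀ r, 0 < r → HasDerivAt M (4*π*(r ^ E * g (y r))) r := by
          intro r hr
          have hcontAt : ContinuousAt (fun s : ℝ => s ^ E * g (y s)) r := by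
            apply ContinuousAt.mul (Real.continuousAt_rpow_const r E (Or.inr hE0.le))
            exact (hgc.continuousAt (hDopen.mem_nhds (hyD r hr.le))).comp
              ((hy r (mem_Ici.2 hr.le)).continuousAt)
          have hmeas : StronglyMeasurableAtFilter (fun s : ℝ => s ^ E * g (y s)) (nhds r) volume :=
            ⟨Ioi 0, Ioi_mem_nhds hr,
              (hfcont.mono (fun x (hx : x ∈ Ioi 0) => le_of_lt hx)).aestronglyMeasurable
                measurableSet_Ioi⟩
          have hder := intervalIntegral.integral_hasDerivAt_right
            (hfint 0 r le_rfl hr.le) hmeas hcontAt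
          rw [hM]
          exact hder.const_mul (4*π)
        have Mcont : ∀ r, 0 < r → ContinuousAt M r :=
          fun r hr => (Mderiv r hr).continuousAt
        set Kc := 4 * π * c / (2:ℝ) ^ p' with hKc
        have h2p' : (0:ℝ) < (2:ℝ) ^ p' := Real.rpow_pos_of_pos (by norm_num) _
        have hKcpos : 0 < Kc := by positivity
        have Mlow : ∀ r, r0 ≤ r → Kc * r ^ (E - p') * M r ^ p' ≤ 4*π*(r ^ E * g (y r)) := by
          intro r hr
          have hr0r : 0 < r := lt_of_lt_of_le hr00 hr
          have hMr : 0 < M r := Mpos r hr0r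
          have h1 : c * y r ^ p' ≤ g (y r) := glow r hr p' hp'p
          have h2 : M r/(2*r) ≤ y r := ystep r hr0r
          have h25 : 0 < M r/(2*r) := by positivity
          have h3 : (M r/(2*r)) ^ p' ≤ y r ^ p' := Real.rpow_le_rpow h25.le h2 hp'0.le
          have h4 : (M r/(2*r)) ^ p' = M r ^ p' / ((2:ℝ) ^ p' * r ^ p') := by
            rw [Real.div_rpow hMr.le (by positivity), Real.mul_rpow (by norm_num) hr0r.le]
          have h5 : r ^ E / r ^ p' = r ^ (E-p') := by rw [← Real.rpow_sub hr0r]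
          have h6 : Kc * r ^ (E-p') * M r ^ p' = 4*π*(r ^ E * (c * (M r ^ p' / ((2:ℝ) ^ p' * r ^ p')))) := by
            rw [← h5, hKc]
            have : r ^ p' ≠ 0 := (Real.rpow_pos_of_pos hr0r _).ne'
            field_simp
          rw [h6]
          have h7 : c * (M r ^ p' / ((2:ℝ) ^ p' * r ^ p')) ≤ g (y r) := by
            rw [← h4]
            calc c * (M r/(2*r)) ^ p' ≤ c * y r ^ p' := by nlinarith
              _ ≤ g (y r) := h1
          have h8 : (0:ℝ) ≤ r ^ E := Real.rpow_nonneg hr0r.le _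
          exact mul_le_mul_of_nonneg_left (mul_le_mul_of_nonneg_left h7 h8) (by positivity)
        refine blowdown (a := r0) (K := (p' - 1) * Kc) (μ := E - p')
          (W := fun x => M x ^ (1 - p'))
          (W' := fun x => (4*π*(x ^ E * g (y x))) * (1 - p') * M x ^ (1 - p' - 1))
          hr00 (by nlinarith) (by linarith)
          (fun r hr => (Mderiv r (lt_of_lt_of_le hr00 hr)).rpow_const
            (Or.inl (Mpos r (lt_of_lt_of_le hr00 hr)).ne'))
          ?_ ?_ (fun r hr => Real.rpow_pos_of_pos (Mpos r (lt_of_lt_of_le hr00 hr)) _)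
        · have hMc : ContinuousOn M (Ici r0) :=
            fun r hr => (Mcont r (lt_of_lt_of_le hr00 hr)).continuousWithinAt
          apply ContinuousOn.mul
          · apply ContinuousOn.mul
            · exact continuousOn_const.mul
                (hfcont.mono (fun x hx => hr00.le.trans hx))
            · exact continuousOn_const
          · exact hMc.rpow_const (fun x hx => Or.inl (Mpos x (lt_of_lt_of_le hr00 hx)).ne')
        · intro r hr
          rw [mem_Ici] at hr
          have hr0r : 0 < r := lt_of_lt_of_le hr00 hr
          have hMr : 0 < M r := Mpos r hr0r
          have hMrp : M r ^ p' * M r ^ (1 - p' - 1) = 1 := by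
            rw [← Real.rpow_add hMr]; norm_num
          have hmlt : (1-p') * M r ^ (1-p'-1) ≤ 0 := by
            have := Real.rpow_pos_of_pos hMr (1-p'-1)
            nlinarith
          have h4 : (4*π*(r ^ E * g (y r))) * ((1-p') * M r ^ (1-p'-1)) ≤
              (Kc * r ^ (E-p') * M r ^ p') * ((1-p') * M r ^ (1-p'-1)) :=
            mul_le_mul_of_nonpos_right (Mlow r hr) hmlt
          calc (4*π*(r ^ E * g (y r))) * (1-p') * M r ^ (1-p'-1)
              = (4*π*(r ^ E * g (y r))) * ((1-p') * M r ^ (1-p'-1)) := by ring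
            _ ≤ (Kc * r ^ (E-p') * M r ^ p') * ((1-p') * M r ^ (1-p'-1)) := h4
            _ = -((p'-1) * Kc) * r ^ (E-p') * (M r ^ p' * M r ^ (1-p'-1)) := by ring
            _ = -((p'-1) * Kc) * r ^ (E-p') := by rw [hMrp, mul_one]
    · -- easy case: y bounded below by z1
      push_neg at hcase
      set z2 := min z1 ya with hz2
      have hz20 : 0 < z2 := lt_min hz10 hya
      have hz2D : z2 ∈ D := hmemD _ (min_le_right _ _)
      have hgz2 : 0 < g z2 := hgpos _ hz20 hz2D
      have hylow : ∀ s, 0 ≤ s → z2 ≤ y s := by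
        intro s hs
        rcases eq_or_lt_of_le hs with h | h
        · rw [← h, hy0]; exact min_le_right _ _
        · exact le_trans (min_le_left _ _) (hcase s h)
      set K := 4 * π * g z2 / (E+1) with hK
      have hKpos : 0 < K := by positivity
      refine blowdown (a := 1) (K := K) (μ := E - 1) one_pos hKpos (by linarith)
        (fun r hr => hy r (mem_Ici.2 (le_trans zero_le_one hr)))
        (hy'c.mono (fun x hx => mem_Ici.2 (le_trans zero_le_one hx)))
        ?_ (fun r hr => hpos r (le_trans zero_le_one hr))
      intro r hr
      rw [mem_Ici] at hr
      have hr0 : (0:ℝ) < r := lt_of_lt_of_le one_pos hr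
      have hMlow : K * r ^ (E+1) ≤ M r := by
        simp only [hM]
        have hlow : ∫ u in (0:ℝ)..r, u ^ E * g z2 ≤ ∫ u in (0:ℝ)..r, u ^ E * g (y u) := by
          apply intervalIntegral.integral_mono_on hr0.le
          · exact (hrpc.continuousOn.mul continuousOn_const).intervalIntegrable
          · exact hfint 0 r le_rfl hr0.le
          · intro u hu
            have hgle : g z2 ≤ g (y u) := hgmono hz2D (hyD u hu.1) (hylow u hu.1)
            have h4 : (0:ℝ) ≤ u ^ E := Real.rpow_nonneg hu.1 _
            nlinarith
        have heval : ∫ u in (0:ℝ)..r, u ^ E * g z2 = g z2 * (r ^ (E+1) / (E+1)) := by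
          rw [intervalIntegral.integral_mul_const,
            integral_rpow (Or.inl (by linarith : (-1:ℝ) < E)),
            Real.zero_rpow (by linarith : E + 1 ≠ 0)]
          ring
        have hKr : K * r ^ (E+1) = 4 * π * (g z2 * (r ^ (E+1) / (E+1))) := by
          rw [hK]; field_simp
        rw [hKr, ← heval]
        nlinarith [hlow, hπ]
      have h6 := hineq' r hr0
      refine le_trans h6 ?_
      rw [neg_mul, ← hdivpow r hr0 K]
      gcongr
  obtain ⟨R, hR0, hRy⟩ := hex
  refine ⟨R, ⟨hR0, hRy⟩, ?_⟩
  rintro R' ⟨hR'0, hR'y⟩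
  exact ystrict.injOn (mem_Ici.2 hR'0.le) (mem_Ici.2 hR0.le) (by rw [hR'y, hRy])
end

section
/- Let c > 0, y* > 0, l > -1/2, and n with 0 < n < 3 + l and n + l ≠ 1. Suppose a positive function y(r) satisfies y(r) ≥ m₁/r for r ≥ 1 (with m₁ > 0), y(r) → 0 as r → ∞, and C₁ r^(2l+2) ≤ (1/c) ∫_{y(r)}^{y*} η^{-(n+l)} dη + C₂ for all large r, with constants C₁, C₂ > 0. Then this is contradictory; i.e., no such function exists. -/
open Real MeasureTheory Set Filter

theorem stmt5 (c ystar l n m₁ C₁ C₂ : ℝ) (hc : 0 < c) (hys : 0 < ystar)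
    (hl : -1/2 < l) (hn0 : 0 < n) (hn3 : n < 3 + l) (hnl : n + l ≠ 1)
    (hm : 0 < m₁) (hC₁ : 0 < C₁) (hC₂ : 0 < C₂)
    (y : ℝ → ℝ) (hypos : ∀ r : ℝ, 0 < y r)
    (hlow : ∀ r ≥ (1:ℝ), m₁ / r ≤ y r)
    (hlim : Tendsto y atTop (nhds 0))
    (hineq : ∃ r₀ : ℝ, ∀ r ≥ r₀,
      C₁ * r ^ (2*l+2) ≤ (1/c) * (∫ η in (y r)..ystar, η ^ (-(n+l))) + C₂) :
    False := by
  obtain ⟨r₀, hineq⟩ := hineq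
  set p : ℝ := 2*l+2 with hp_def
  set a : ℝ := 1 - n - l with ha_def
  set q : ℝ := 3 + l - n with hq_def
  have hp : 0 < p := by simp only [hp_def]; linarith
  have hq : 0 < q := by simp only [hq_def]; linarith
  have ha : a ≠ 0 := by simp only [ha_def]; intro h; apply hnl; linarith
  -- integral computation
  have hint : ∀ r : ℝ, (∫ η in (y r)..ystar, η ^ (-(n+l)))
      = (ystar ^ a - (y r) ^ a) / a := by
    intro r
    rw [integral_rpow]
    · norm_num [ha_def]
      ring_nf
    · right
      constructor
      · intro h; apply hnl; linarith
      · intro h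
        rw [Set.mem_uIcc] at h
        rcases h with ⟨h1, _⟩ | ⟨h1, _⟩
        · exact absurd h1 (not_le.mpr (hypos r))
        · exact absurd h1 (not_le.mpr hys)
  -- the key function
  set g : ℝ → ℝ := fun r => ((1/c) * ((ystar ^ a - (y r) ^ a) / a) + C₂) * (y r) ^ p with hg_def
  -- lower bound eventually
  have hlb : ∀ r ≥ max r₀ 1, C₁ * m₁ ^ p ≤ g r := by
    intro r hr
    have hr1 : (1:ℝ) ≤ r := le_trans (le_max_right _ _) hr
    have hr0 : r₀ ≤ r := le_trans (le_max_left _ _) hr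
    have hrpos : 0 < r := lt_of_lt_of_le one_pos hr1
    have hmy : m₁ ≤ r * y r := by
      have := hlow r hr1
      rw [div_le_iff₀ hrpos] at this
      linarith [this]
    have h1 : C₁ * m₁ ^ p ≤ C₁ * (r * y r) ^ p :=
      mul_le_mul_of_nonneg_left (Real.rpow_le_rpow hm.le hmy hp.le) hC₁.le
    have h2 : C₁ * (r * y r) ^ p = (C₁ * r ^ p) * (y r) ^ p := by
      rw [Real.mul_rpow hrpos.le (hypos r).le]; ring
    have h3 := hineq r hr0
    rw [hint r] at h3
    calc C₁ * m₁ ^ p ≤ (C₁ * r ^ p) * (y r) ^ p := by rw [← h2]; exact h1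
      _ ≤ g r := by
        apply mul_le_mul_of_nonneg_right h3 (Real.rpow_nonneg (hypos r).le p)
  -- limits
  have hrp : ∀ s : ℝ, 0 < s → Tendsto (fun r => (y r) ^ s) atTop (nhds 0) := by
    intro s hs
    have hc : ContinuousAt (fun x : ℝ => x ^ s) 0 :=
      Real.continuousAt_rpow_const 0 s (Or.inr hs.le)
    have := hc.tendsto.comp hlim
    simpa [Real.zero_rpow hs.ne', Function.comp_def] using this
  have h1 := hrp p hp
  have h2 := hrp q hq
  have hgl : Tendsto g atTop (nhds 0) := by
    have key : ∀ r : ℝ, g r = (1/c) * ((ystar ^ a * (y r) ^ p - (y r) ^ q) / a)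
        + C₂ * (y r) ^ p := by
      intro r
      have : (y r) ^ a * (y r) ^ p = (y r) ^ q := by
        rw [← Real.rpow_add (hypos r)]
        congr 1
        simp [ha_def, hp_def, hq_def]; ring
      simp only [hg_def]
      rw [← this]
      ring
    have T : Tendsto (fun r => (1/c) * ((ystar ^ a * (y r) ^ p - (y r) ^ q) / a)
        + C₂ * (y r) ^ p) atTop (nhds ((1/c) * ((ystar ^ a * 0 - 0) / a) + C₂ * 0)) := by
      exact ((((tendsto_const_nhds.mul h1).sub h2).div_const a).const_mul (1/c)).add
        (h1.const_mul C₂)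
    have hz : (1/c) * ((ystar ^ a * 0 - 0) / a) + C₂ * 0 = 0 := by ring
    rw [hz] at T
    exact T.congr (fun r => (key r).symm)
  have hle : C₁ * m₁ ^ p ≤ 0 := by
    apply ge_of_tendsto hgl
    filter_upwards [eventually_ge_atTop (max r₀ 1)] with r hr using hlb r hr
  have : 0 < C₁ * m₁ ^ p := mul_pos hC₁ (Real.rpow_pos_of_pos hm p)
  linarith
end

section
/- Let Φ : ℝ → [0,∞) be measurable with Φ(η) = 0 for η < 0, and suppose for every compact K ⊂ ℝ there is C > 0 with Φ(η) ≤ C η^κ for η ∈ K ∩ (0,∞), where κ > -1. Let l > -1/2 and define g(z) = c_l ∫₀^z Φ(η)(z-η)^(l+1/2) dη for z > 0, g(z) = 0 for z ≤ 0. Then g is continuous on ℝ, continuously differentiable on (0,∞), and g'(z) = (l+1/2) c_l ∫₀^z Φ(η)(z-η)^(l-1/2) dη for z > 0. If moreover κ + l + 1/2 > 0, then g ∈ C¹(ℝ). -/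
open Real MeasureTheory Set Filter
open intervalIntegral Topology

private lemma rpow_le_max {a b x q : ℝ} (ha : 0 < a) (hax : a ≤ x) (hxb : x ≤ b) :
    x ^ q ≤ max (a ^ q) (b ^ q) := by
  rcases le_or_gt 0 q with h | h
  · exact le_max_of_le_right (Real.rpow_le_rpow (ha.le.trans hax) hxb h)
  · exact le_max_of_le_left (Real.rpow_le_rpow_of_nonpos ha hax h.le)

private lemma beta_int {κ q z : ℝ} (hκ : -1 < κ) (hq : -1 < q) (hz : 0 < z) :
    IntervalIntegrable (fun η => η ^ κ * (z - η) ^ q) volume 0 z := by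
  rw [intervalIntegrable_iff_integrableOn_Ioc_of_le hz.le]
  have hsplit : Ioc (0:ℝ) (z/2) ∪ Ioc (z/2) z = Ioc 0 z :=
    Set.Ioc_union_Ioc_eq_Ioc (by linarith) (by linarith)
  rw [← hsplit]
  have hmeas : Measurable (fun η : ℝ => η ^ κ * (z - η) ^ q) := by fun_prop
  apply MeasureTheory.IntegrableOn.union
  · -- on Ioc 0 (z/2) : dominate by M * η^κ
    have hint : IntegrableOn (fun x : ℝ => x ^ κ) (Ioc 0 (z/2)) volume :=
      (intervalIntegrable_iff_integrableOn_Ioc_of_le (by linarith)).mp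
        (intervalIntegrable_rpow' hκ)
    refine Integrable.mono' (hint.const_mul (max ((z/2) ^ q) (z ^ q)))
      hmeas.aestronglyMeasurable ?_
    filter_upwards [ae_restrict_mem measurableSet_Ioc] with η hη
    have h1 : (0:ℝ) < η := hη.1
    have h2 : η ≤ z / 2 := hη.2
    rw [Real.norm_eq_abs, abs_of_nonneg
      (mul_nonneg (Real.rpow_nonneg h1.le κ) (Real.rpow_nonneg (by linarith) q))]
    calc η ^ κ * (z - η) ^ q ≤ η ^ κ * max ((z/2) ^ q) (z ^ q) := by
          exact mul_le_mul_of_nonneg_left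
            (rpow_le_max (by linarith) (by linarith) (by linarith)) (by positivity)
      _ = max ((z/2) ^ q) (z ^ q) * η ^ κ := mul_comm _ _
  · -- on Ioc (z/2) z : dominate by M * (z-η)^q
    have hint : IntervalIntegrable (fun η : ℝ => (z - η) ^ q) volume (z/2) z := by
      have h := (intervalIntegrable_rpow' hq (a := 0) (b := z/2)).comp_sub_left z
      have e : z - z/2 = z/2 := by ring
      have h2 : IntervalIntegrable (fun x => (z - x) ^ q) volume z (z/2) := by
        rw [e] at h; simpa using h
      exact h2.symm
    have hint' : IntegrableOn (fun η : ℝ => (z - η) ^ q) (Ioc (z/2) z) volume :=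
      (intervalIntegrable_iff_integrableOn_Ioc_of_le (by linarith)).mp hint
    refine Integrable.mono' (hint'.const_mul (max ((z/2) ^ κ) (z ^ κ)))
      hmeas.aestronglyMeasurable ?_
    filter_upwards [ae_restrict_mem measurableSet_Ioc] with η hη
    have h1 : z / 2 < η := hη.1
    have h2 : η ≤ z := hη.2
    have hzη : (0:ℝ) ≤ z - η := by linarith
    rw [Real.norm_eq_abs, abs_of_nonneg
      (mul_nonneg (Real.rpow_nonneg (by linarith) κ) (Real.rpow_nonneg hzη q))]
    calc η ^ κ * (z - η) ^ q ≤ max ((z/2) ^ κ) (z ^ κ) * (z - η) ^ q :=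
          mul_le_mul_of_nonneg_right
            (rpow_le_max (by linarith) h1.le h2) (by positivity)
      _ = _ := rfl

private lemma phi_int {κ q z C : ℝ} (hκ : -1 < κ) (hq : -1 < q) (hz : 0 < z)
    {Φ : ℝ → ℝ} (hΦm : Measurable Φ) (hΦnn : ∀ η, 0 ≤ Φ η)
    (hb : ∀ η ∈ Ioc (0:ℝ) z, Φ η ≤ C * η ^ κ) :
    IntervalIntegrable (fun η => Φ η * (z - η) ^ q) volume 0 z := by
  rw [intervalIntegrable_iff_integrableOn_Ioc_of_le hz.le]
  have hbeta : IntegrableOn (fun η : ℝ => η ^ κ * (z - η) ^ q) (Ioc 0 z) volume :=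
    (intervalIntegrable_iff_integrableOn_Ioc_of_le hz.le).mp (beta_int hκ hq hz)
  have hm : Measurable (fun η : ℝ => Φ η * (z - η) ^ q) := by fun_prop
  refine Integrable.mono' (hbeta.const_mul C) hm.aestronglyMeasurable ?_
  filter_upwards [ae_restrict_mem measurableSet_Ioc] with η hη
  have h1 : (0:ℝ) < η := hη.1
  have hzη : (0:ℝ) ≤ z - η := by linarith [hη.2]
  rw [Real.norm_eq_abs, abs_of_nonneg (mul_nonneg (hΦnn η) (Real.rpow_nonneg hzη q))]
  calc Φ η * (z - η) ^ q ≤ (C * η ^ κ) * (z - η) ^ q :=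
        mul_le_mul_of_nonneg_right (hb η hη) (Real.rpow_nonneg hzη q)
    _ = C * (η ^ κ * (z - η) ^ q) := by ring

private lemma H_nonneg {q z : ℝ} (hz : 0 ≤ z) {Φ : ℝ → ℝ} (hΦnn : ∀ η, 0 ≤ Φ η) :
    0 ≤ ∫ η in (0:ℝ)..z, Φ η * (z - η) ^ q := by
  refine intervalIntegral.integral_nonneg hz fun u hu => ?_
  exact mul_nonneg (hΦnn u) (Real.rpow_nonneg (by linarith [hu.2]) q)

private lemma H_le {κ q z C : ℝ} (hκ : -1 < κ) (hq : -1 < q) (hz : 0 < z)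
    {Φ : ℝ → ℝ} (hΦm : Measurable Φ) (hΦnn : ∀ η, 0 ≤ Φ η) (hC : 0 ≤ C)
    (hb : ∀ η ∈ Ioc (0:ℝ) z, Φ η ≤ C * η ^ κ) :
    ∫ η in (0:ℝ)..z, Φ η * (z - η) ^ q
      ≤ C * z ^ (κ + q + 1) * ∫ s in (0:ℝ)..1, s ^ κ * (1 - s) ^ q := by
  have hbeta : IntegrableOn (fun η : ℝ => η ^ κ * (z - η) ^ q) (Ioc 0 z) volume :=
    (intervalIntegrable_iff_integrableOn_Ioc_of_le hz.le).mp (beta_int hκ hq hz)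
  have hphi : IntegrableOn (fun η : ℝ => Φ η * (z - η) ^ q) (Ioc 0 z) volume :=
    (intervalIntegrable_iff_integrableOn_Ioc_of_le hz.le).mp
      (phi_int hκ hq hz hΦm hΦnn hb)
  have step1 : ∫ η in (0:ℝ)..z, Φ η * (z - η) ^ q
      ≤ ∫ η in (0:ℝ)..z, C * (η ^ κ * (z - η) ^ q) := by
    rw [intervalIntegral.integral_of_le hz.le, intervalIntegral.integral_of_le hz.le]
    refine setIntegral_mono_on hphi (hbeta.const_mul C) measurableSet_Ioc fun η hη => ?_
    have hzη : (0:ℝ) ≤ z - η := by linarith [hη.2]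
    calc Φ η * (z - η) ^ q ≤ (C * η ^ κ) * (z - η) ^ q :=
          mul_le_mul_of_nonneg_right (hb η hη) (Real.rpow_nonneg hzη q)
      _ = C * (η ^ κ * (z - η) ^ q) := by ring
  have step2 : ∫ η in (0:ℝ)..z, η ^ κ * (z - η) ^ q
      = z ^ (κ + q + 1) * ∫ s in (0:ℝ)..1, s ^ κ * (1 - s) ^ q := by
    have hc := intervalIntegral.integral_comp_mul_right
      (fun η : ℝ => η ^ κ * (z - η) ^ q) (a := 0) (b := 1) hz.ne'
    simp only [zero_mul, one_mul, smul_eq_mul] at hc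
    -- hc : ∫ s in 0..1, (s*z)^κ * (z - s*z)^q = z⁻¹ * ∫ η in 0..z, η^κ*(z-η)^q
    have hcong : ∫ s in (0:ℝ)..1, (s * z) ^ κ * (z - s * z) ^ q
        = ∫ s in (0:ℝ)..1, z ^ κ * z ^ q * (s ^ κ * (1 - s) ^ q) := by
      refine intervalIntegral.integral_congr fun s hs => ?_
      rw [Set.uIcc_of_le (by norm_num : (0:ℝ) ≤ 1)] at hs
      have hs0 : 0 ≤ s := hs.1
      have hs1 : 0 ≤ 1 - s := by linarith [hs.2]
      rw [Real.mul_rpow hs0 hz.le, show z - s * z = z * (1 - s) by ring,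
        Real.mul_rpow hz.le hs1]
      ring
    rw [hcong, intervalIntegral.integral_const_mul] at hc
    have hz' : (z:ℝ) ≠ 0 := hz.ne'
    field_simp at hc
    rw [show (κ + q + 1) = κ + (q + 1) by ring, Real.rpow_add hz,
      Real.rpow_add hz, Real.rpow_one]
    nlinarith [hc]
  calc ∫ η in (0:ℝ)..z, Φ η * (z - η) ^ q
      ≤ ∫ η in (0:ℝ)..z, C * (η ^ κ * (z - η) ^ q) := step1
    _ = C * ∫ η in (0:ℝ)..z, η ^ κ * (z - η) ^ q :=
        intervalIntegral.integral_const_mul _ _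
    _ = C * z ^ (κ + q + 1) * ∫ s in (0:ℝ)..1, s ^ κ * (1 - s) ^ q := by
        rw [step2]; ring

private lemma H_tendsto_zero {κ q : ℝ} (hκ : -1 < κ) (hq : -1 < q) (he : 0 < κ + q + 1)
    {Φ : ℝ → ℝ} (hΦm : Measurable Φ) (hΦnn : ∀ η, 0 ≤ Φ η)
    (hΦK : ∀ K : Set ℝ, IsCompact K → ∃ C > (0:ℝ), ∀ η ∈ K, 0 < η → Φ η ≤ C * η ^ κ) :
    Tendsto (fun z => ∫ η in (0:ℝ)..z, Φ η * (z - η) ^ q) (𝓝[>] 0) (𝓝 0) := by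
  obtain ⟨C, hC, hCb⟩ := hΦK (Icc 0 1) isCompact_Icc
  set B := ∫ s in (0:ℝ)..1, s ^ κ * (1 - s) ^ q with hB
  have hupper : Tendsto (fun z : ℝ => C * z ^ (κ + q + 1) * B) (𝓝[>] 0) (𝓝 0) := by
    have h1 : Tendsto (fun z : ℝ => z ^ (κ + q + 1)) (𝓝 0) (𝓝 0) := by
      have := Real.continuousAt_rpow_const 0 (κ + q + 1) (Or.inr he.le)
      simpa [Real.zero_rpow he.ne'] using this.tendsto
    have h2 : Tendsto (fun z : ℝ => C * z ^ (κ + q + 1) * B) (𝓝 0) (𝓝 (C * 0 * B)) :=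
      (h1.const_mul C).mul_const B
    simpa using h2.mono_left (nhdsWithin_le_nhds : 𝓝[>] (0:ℝ) ≤ 𝓝 0)
  refine tendsto_of_tendsto_of_tendsto_of_le_of_le' tendsto_const_nhds hupper ?_ ?_
  · filter_upwards [self_mem_nhdsWithin] with z hz
    exact H_nonneg (le_of_lt hz) hΦnn
  · filter_upwards [Ioc_mem_nhdsGT_of_mem (by simp : (0:ℝ) ∈ Ico (0:ℝ) 1)] with z hz
    exact H_le hκ hq hz.1 hΦm hΦnn hC.le
      (fun η hη => hCb η ⟨hη.1.le, hη.2.trans hz.2⟩ hη.1)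

private lemma max_int {κ q T e C t : ℝ} (hκ : -1 < κ) (he : 0 < e) (heT : e ≤ T)
    (ht : 0 < t) (htT : t ≤ T) (hC0 : 0 ≤ C)
    {Φ : ℝ → ℝ} (hΦm : Measurable Φ) (hΦnn : ∀ η, 0 ≤ Φ η)
    (hCb : ∀ η ∈ Ioc (0:ℝ) T, Φ η ≤ C * η ^ κ) :
    IntervalIntegrable (fun η => Φ η * (max (t - η) e) ^ q) volume 0 t := by
  rw [intervalIntegrable_iff_integrableOn_Ioc_of_le ht.le]
  have hint : IntegrableOn (fun x : ℝ => x ^ κ) (Ioc 0 t) volume :=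
    (intervalIntegrable_iff_integrableOn_Ioc_of_le ht.le).mp (intervalIntegrable_rpow' hκ)
  have hm : Measurable (fun η : ℝ => Φ η * (max (t - η) e) ^ q) := by fun_prop
  refine Integrable.mono' (hint.const_mul (C * max (e ^ q) (T ^ q)))
    hm.aestronglyMeasurable ?_
  filter_upwards [ae_restrict_mem measurableSet_Ioc] with η hη
  have h1 : (0:ℝ) < η := hη.1
  have hmax1 : e ≤ max (t - η) e := le_max_right _ _
  have hmax2 : max (t - η) e ≤ T := max_le (by linarith [hη.1]) heT
  have hmq : (max (t - η) e) ^ q ≤ max (e ^ q) (T ^ q) := rpow_le_max he hmax1 hmax2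
  rw [Real.norm_eq_abs, abs_of_nonneg (mul_nonneg (hΦnn η)
    (Real.rpow_nonneg (le_trans he.le hmax1) q))]
  calc Φ η * (max (t - η) e) ^ q ≤ (C * η ^ κ) * max (e ^ q) (T ^ q) := by
        apply mul_le_mul (hCb η ⟨h1, hη.2.trans htT⟩) hmq
          (Real.rpow_nonneg (le_trans he.le hmax1) q)
          (mul_nonneg hC0 (Real.rpow_nonneg h1.le κ))
    _ = C * max (e ^ q) (T ^ q) * η ^ κ := by ring

private lemma Fn_contAt {κ q T e C : ℝ} (hκ : -1 < κ) (he : 0 < e) (heT : e ≤ T)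
    (hC0 : 0 ≤ C)
    {Φ : ℝ → ℝ} (hΦm : Measurable Φ) (hΦnn : ∀ η, 0 ≤ Φ η)
    (hCb : ∀ η ∈ Ioc (0:ℝ) T, Φ η ≤ C * η ^ κ)
    {t₁ : ℝ} (ht₁ : t₁ ∈ Ioo (0:ℝ) T) :
    ContinuousAt (fun t => ∫ η in (0:ℝ)..t, Φ η * (max (t - η) e) ^ q) t₁ := by
  set μ := volume.restrict (Ioo (0:ℝ) T) with hμ
  set F' : ℝ → ℝ → ℝ := fun t η => if η < t then Φ η * (max (t - η) e) ^ q else 0 with hF'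
  have key : ∀ t ∈ Ioo (0:ℝ) T, (∫ η in (0:ℝ)..t, Φ η * (max (t - η) e) ^ q)
      = ∫ η, F' t η ∂μ := by
    intro t ht
    rw [hμ, intervalIntegral.integral_of_le ht.1.le, integral_Ioc_eq_integral_Ioo]
    have hind : ∀ η, F' t η = (Iio t).indicator (fun η => Φ η * (max (t - η) e) ^ q) η := by
      intro η; simp [hF', Set.indicator_apply]
    simp_rw [hind]
    rw [MeasureTheory.setIntegral_indicator measurableSet_Iio, Set.Ioo_inter_Iio,
      min_eq_right ht.2.le]
  have hcont : ContinuousAt (fun t => ∫ η, F' t η ∂μ) t₁ := by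
    apply MeasureTheory.continuousAt_of_dominated
      (bound := fun η => C * max (e ^ q) (T ^ q) * η ^ κ)
    · filter_upwards with t
      have hm : Measurable (F' t) := by
        apply Measurable.ite measurableSet_Iio ?_ measurable_const
        fun_prop
      exact hm.aestronglyMeasurable
    · filter_upwards [isOpen_Ioo.mem_nhds ht₁] with t ht
      filter_upwards [ae_restrict_mem measurableSet_Ioo] with η hη
      have h1 : (0:ℝ) < η := hη.1
      by_cases hlt : η < t
      · simp only [hF', if_pos hlt]
        have hmax1 : e ≤ max (t - η) e := le_max_right _ _
        have hmax2 : max (t - η) e ≤ T := max_le (by linarith [ht.2]) heT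
        have hmq : (max (t - η) e) ^ q ≤ max (e ^ q) (T ^ q) := rpow_le_max he hmax1 hmax2
        rw [Real.norm_eq_abs, abs_of_nonneg (mul_nonneg (hΦnn η)
          (Real.rpow_nonneg (le_trans he.le hmax1) q))]
        calc Φ η * (max (t - η) e) ^ q ≤ (C * η ^ κ) * max (e ^ q) (T ^ q) := by
              apply mul_le_mul (hCb η ⟨h1, hη.2.le⟩) hmq
                (Real.rpow_nonneg (le_trans he.le hmax1) q)
                (mul_nonneg hC0 (Real.rpow_nonneg h1.le κ))
          _ = C * max (e ^ q) (T ^ q) * η ^ κ := by ring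
      · simp only [hF', if_neg hlt, norm_zero]
        positivity
    · have hint : IntegrableOn (fun x : ℝ => x ^ κ) (Ioo 0 T) volume :=
        (integrableOn_Ioc_iff_integrableOn_Ioo).mp
          ((intervalIntegrable_iff_integrableOn_Ioc_of_le (by linarith [ht₁.1, ht₁.2]) ).mp
            (intervalIntegrable_rpow' hκ))
      exact hint.const_mul _
    · have hsing : ∀ᵐ η ∂μ, η ≠ t₁ := by
        rw [hμ]
        refine ae_restrict_of_ae ?_
        rw [MeasureTheory.ae_iff]
        have : {η : ℝ | ¬ η ≠ t₁} = {t₁} := by ext x; simp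
        rw [this]; exact measure_singleton t₁
      filter_upwards [hsing] with η hη
      rcases lt_or_gt_of_ne hη with hlt | hgt
      · -- η < t₁ : eventually η < t
        have hev : (fun t => F' t η) =ᶠ[𝓝 t₁] fun t => Φ η * (max (t - η) e) ^ q := by
          filter_upwards [isOpen_Ioi.mem_nhds (show t₁ ∈ Ioi η from hlt)] with t ht
          exact if_pos ht
        refine ContinuousAt.congr ?_ hev.symm
        have hbase : ContinuousAt (fun t : ℝ => max (t - η) e) t₁ :=
          ((continuous_id.sub continuous_const).max continuous_const).continuousAt
        have hne : max (t₁ - η) e ≠ 0 := by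
          have := lt_of_lt_of_le he (le_max_right (t₁ - η) e); linarith
        exact (hbase.rpow_const (Or.inl hne)).const_mul _
      · -- t₁ < η : eventually t < η
        have hev : (fun t => F' t η) =ᶠ[𝓝 t₁] fun _ => 0 := by
          filter_upwards [isOpen_Iio.mem_nhds (show t₁ ∈ Iio η from hgt)] with t ht
          exact if_neg (not_lt.mpr ht.le)
        exact ContinuousAt.congr continuousAt_const hev.symm
  refine ContinuousAt.congr hcont ?_
  filter_upwards [isOpen_Ioo.mem_nhds ht₁] with t ht
  exact (key t ht).symm

private lemma H_contAt {κ q : ℝ} (hκ : -1 < κ) (hq : -1 < q)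
    {Φ : ℝ → ℝ} (hΦm : Measurable Φ) (hΦnn : ∀ η, 0 ≤ Φ η)
    (hΦK : ∀ K : Set ℝ, IsCompact K → ∃ C > (0:ℝ), ∀ η ∈ K, 0 < η → Φ η ≤ C * η ^ κ)
    {t₀ : ℝ} (ht₀ : 0 < t₀) :
    ContinuousAt (fun z => ∫ η in (0:ℝ)..z, Φ η * (z - η) ^ q) t₀ := by
  have hq1 : (0:ℝ) < q + 1 := by linarith
  set T : ℝ := t₀ + 1 with hT
  have hTpos : 0 < T := by rw [hT]; linarith
  obtain ⟨C, hC, hCb'⟩ := hΦK (Icc 0 T) isCompact_Icc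
  have hCb : ∀ η ∈ Ioc (0:ℝ) T, Φ η ≤ C * η ^ κ := fun η hη => hCb' η ⟨hη.1.le, hη.2⟩ hη.1
  set s : Set ℝ := Ioo (t₀/2) T with hs
  set ε : ℕ → ℝ := fun n => min (t₀/4) (1/(n+1)) with hε
  have hε_pos : ∀ n, 0 < ε n := fun n => lt_min (by linarith) (by positivity)
  have hε_le : ∀ n, ε n ≤ t₀/4 := fun n => min_le_left _ _
  have hεT : ∀ n, ε n ≤ T := fun n => (hε_le n).trans (by rw [hT]; linarith)
  set M : ℝ := C * max ((t₀/4) ^ κ) (T ^ κ) with hM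
  set H : ℝ → ℝ := fun z => ∫ η in (0:ℝ)..z, Φ η * (z - η) ^ q with hH
  set F : ℕ → ℝ → ℝ := fun n t => ∫ η in (0:ℝ)..t, Φ η * (max (t - η) (ε n)) ^ q with hF
  have hkey : ∀ n, ∀ t ∈ s, |H t - F n t|
      ≤ M * (ε n ^ (q+1) / (q+1) + ε n ^ (q+1)) := by
    intro n t ht
    set e : ℝ := ε n with he'
    have he : 0 < e := hε_pos n
    have htpos : 0 < t := lt_trans (by linarith) ht.1
    have htT : t ≤ T := ht.2.le
    have hte : t₀/4 ≤ t - e := by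
      have := hε_le n; have := ht.1; simp only [he'] at *; linarith
    have htepos : 0 < t - e := by linarith
    have hint1 : IntervalIntegrable (fun η => Φ η * (t - η) ^ q) volume 0 t :=
      phi_int hκ hq htpos hΦm hΦnn (fun η hη => hCb η ⟨hη.1, hη.2.trans htT⟩)
    have hint2 : IntervalIntegrable (fun η => Φ η * (max (t - η) e) ^ q) volume 0 t :=
      max_int hκ he (hεT n) htpos htT hC.le hΦm hΦnn hCb
    have hd := hint1.sub hint2
    have hsub1 : Set.uIcc 0 (t - e) ⊆ Set.uIcc 0 t := by
      rw [Set.uIcc_of_le (by linarith), Set.uIcc_of_le htpos.le]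
      exact Set.Icc_subset_Icc le_rfl (by linarith)
    have hsub2 : Set.uIcc (t - e) t ⊆ Set.uIcc 0 t := by
      rw [Set.uIcc_of_le (by linarith), Set.uIcc_of_le htpos.le]
      exact Set.Icc_subset_Icc (by linarith) le_rfl
    have hsplit : H t - F n t = ∫ η in (t-e)..t,
        (Φ η * (t - η) ^ q - Φ η * (max (t - η) e) ^ q) := by
      have h1 : H t - F n t = ∫ η in (0:ℝ)..t,
          (Φ η * (t - η) ^ q - Φ η * (max (t - η) e) ^ q) :=
        (intervalIntegral.integral_sub hint1 hint2).symm
      have h2 : (∫ η in (0:ℝ)..(t-e),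
          (Φ η * (t - η) ^ q - Φ η * (max (t - η) e) ^ q)) = 0 := by
        have : EqOn (fun η => Φ η * (t - η) ^ q - Φ η * (max (t - η) e) ^ q)
            (fun _ => (0:ℝ)) (Set.uIcc 0 (t-e)) := by
          intro η hη
          rw [Set.uIcc_of_le (by linarith)] at hη
          have : max (t - η) e = t - η := max_eq_left (by linarith [hη.2])
          simp [this]
        rw [intervalIntegral.integral_congr this, intervalIntegral.integral_zero]
      have h3 := intervalIntegral.integral_add_adjacent_intervals
        (hd.mono_set hsub1) (hd.mono_set hsub2)
      rw [h1, ← h3, h2, zero_add]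
    rw [hsplit]
    have habs := intervalIntegral.abs_integral_le_integral_abs
      (f := fun η => Φ η * (t - η) ^ q - Φ η * (max (t - η) e) ^ q)
      (a := t - e) (b := t) (μ := volume) (by linarith)
    -- integrable upper bound
    have hker : IntervalIntegrable (fun η : ℝ => (t - η) ^ q) volume (t-e) t := by
      have h := (intervalIntegrable_rpow' hq (a := 0) (b := e)).comp_sub_left t
      have e1 : t - (0:ℝ) = t := by ring
      rw [e1] at h
      exact h.symm
    have hgb : IntervalIntegrable (fun η : ℝ => M * ((t - η) ^ q + e ^ q))
        volume (t-e) t := ((hker.add (intervalIntegrable_const)).const_mul M)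
    have hmono : (∫ η in (t-e)..t, |Φ η * (t - η) ^ q - Φ η * (max (t - η) e) ^ q|)
        ≤ ∫ η in (t-e)..t, M * ((t - η) ^ q + e ^ q) := by
      refine intervalIntegral.integral_mono_on (by linarith)
        ((hd.mono_set hsub2).abs) hgb ?_
      intro η hη
      have hη1 : t - e ≤ η := hη.1
      have hη2 : η ≤ t := hη.2
      have hηpos : 0 < η := by linarith
      have hmax : max (t - η) e = e := max_eq_right (by linarith)
      have htη : (0:ℝ) ≤ t - η := by linarith
      rw [hmax, ← mul_sub, abs_mul, abs_of_nonneg (hΦnn η)]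
      have hΦle : Φ η ≤ M := by
        calc Φ η ≤ C * η ^ κ := hCb η ⟨hηpos, by linarith⟩
          _ ≤ C * max ((t₀/4) ^ κ) (T ^ κ) := by
              exact mul_le_mul_of_nonneg_left
                (rpow_le_max (by linarith) (by linarith) (by linarith)) hC.le
      have habs2 : |(t - η) ^ q - e ^ q| ≤ (t - η) ^ q + e ^ q := by
        refine (abs_sub _ _).trans ?_
        rw [abs_of_nonneg (Real.rpow_nonneg htη q), abs_of_nonneg (Real.rpow_nonneg he.le q)]
      exact mul_le_mul hΦle habs2 (abs_nonneg _) (le_trans (hΦnn η) hΦle)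
    have hcomp : (∫ η in (t-e)..t, M * ((t - η) ^ q + e ^ q))
        = M * (e ^ (q+1) / (q+1) + e ^ (q+1)) := by
      rw [intervalIntegral.integral_const_mul]
      congr 1
      rw [intervalIntegral.integral_add hker intervalIntegrable_const]
      have hc1 : (∫ η in (t-e)..t, (t - η) ^ q) = e ^ (q+1) / (q+1) := by
        have h := intervalIntegral.integral_comp_sub_left (fun u : ℝ => u ^ q) t
          (a := t - e) (b := t)
        have e1 : t - t = (0:ℝ) := by ring
        have e2 : t - (t - e) = e := by ring
        rw [e1, e2] at h
        rw [h, integral_rpow (Or.inl hq), Real.zero_rpow (by linarith)]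
        ring
      have hc2 : (∫ _ in (t-e)..t, e ^ q) = e ^ (q+1) := by
        rw [intervalIntegral.integral_const, smul_eq_mul]
        have : t - (t - e) = e := by ring
        rw [this, Real.rpow_add he, Real.rpow_one]
        ring
      rw [hc1, hc2]
    exact le_trans (le_trans habs hmono) (le_of_eq hcomp)
  -- uniform convergence
  have hunif : TendstoUniformlyOn F H atTop s := by
    rw [Metric.tendstoUniformlyOn_iff]
    intro δ hδ
    have hε0 : Tendsto ε atTop (𝓝 0) := by
      refine tendsto_of_tendsto_of_tendsto_of_le_of_le tendsto_const_nhds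
        tendsto_one_div_add_atTop_nhds_zero_nat
        (fun n => (hε_pos n).le) (fun n => min_le_right _ _)
    have hεpow : Tendsto (fun n => ε n ^ (q+1)) atTop (𝓝 0) := by
      have hc := Real.continuousAt_rpow_const 0 (q+1) (Or.inr hq1.le)
      have := hc.tendsto.comp hε0
      simpa [Function.comp_def, Real.zero_rpow hq1.ne'] using this
    have hbnd : Tendsto (fun n => M * (ε n ^ (q+1) / (q+1) + ε n ^ (q+1)))
        atTop (𝓝 0) := by
      have := ((hεpow.div_const (q+1)).add hεpow).const_mul M
      simpa using this
    filter_upwards [hbnd.eventually_lt_const hδ] with n hn t ht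
    rw [Real.dist_eq]
    exact lt_of_le_of_lt (hkey n t ht) hn
  have hFc : ∀ n, ContinuousOn (F n) s := by
    intro n t ht
    exact (Fn_contAt hκ (hε_pos n) (hεT n) hC.le hΦm hΦnn hCb
      ⟨lt_trans (by linarith) ht.1, ht.2⟩).continuousWithinAt
  have hHc : ContinuousOn H s := hunif.continuousOn (Frequently.of_forall hFc)
  exact hHc.continuousAt (isOpen_Ioo.mem_nhds ⟨by linarith, by rw [hT]; linarith⟩)

private lemma H_fubini {κ p z C : ℝ} (hκ : -1 < κ) (hp : 0 < p) (hz : 0 < z)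
    {Φ : ℝ → ℝ} (hΦm : Measurable Φ) (hΦnn : ∀ η, 0 ≤ Φ η) (hC0 : 0 ≤ C)
    (hb : ∀ η ∈ Ioc (0:ℝ) z, Φ η ≤ C * η ^ κ) :
    (IntervalIntegrable (fun t => ∫ η in (0:ℝ)..t, Φ η * (t - η) ^ (p-1)) volume 0 z) ∧
    (∫ η in (0:ℝ)..z, Φ η * (z - η) ^ p)
      = p * ∫ t in (0:ℝ)..z, ∫ η in (0:ℝ)..t, Φ η * (t - η) ^ (p-1) := by
  have hp1 : (-1:ℝ) < p - 1 := by linarith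
  set μ := volume.restrict (Ioo (0:ℝ) z) with hμ
  set F : ℝ × ℝ → ℝ := fun pt => if pt.1 < pt.2 then Φ pt.1 * (pt.2 - pt.1) ^ (p-1) else 0
    with hF
  have hFm : Measurable F := by
    refine Measurable.ite (measurableSet_lt measurable_fst measurable_snd) ?_ measurable_const
    fun_prop
  have hFnn : ∀ pt : ℝ × ℝ, 0 ≤ F pt := by
    intro pt; rw [hF]
    dsimp only
    split
    · exact mul_nonneg (hΦnn _) (Real.rpow_nonneg (by linarith) _)
    · exact le_rfl
  -- slice integrability in t for fixed η
  have hslice_int : ∀ η ∈ Ioo (0:ℝ) z, Integrable (fun t => F (η, t)) μ := by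
    intro η hη
    have hind : (fun t => F (η, t))
        = (Ioi η).indicator (fun t => Φ η * (t - η) ^ (p-1)) := by
      funext t; simp [hF, Set.indicator_apply, Set.mem_Ioi]
    rw [hind, hμ]
    rw [MeasureTheory.integrable_indicator_iff measurableSet_Ioi]
    rw [IntegrableOn, MeasureTheory.Measure.restrict_restrict measurableSet_Ioi]
    have : Ioi η ∩ Ioo 0 z = Ioo η z := by
      rw [Set.inter_comm, Set.Ioo_inter_Ioi, max_eq_right hη.1.le]
    rw [this]
    have hker : IntervalIntegrable (fun t : ℝ => (t - η) ^ (p-1)) volume η z := by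
      have h := (intervalIntegrable_rpow' hp1 (a := 0) (b := z - η)).comp_sub_right η
      have e1 : (0:ℝ) + η = η := by ring
      have e2 : z - η + η = z := by ring
      rw [e1, e2] at h
      exact h
    have := ((intervalIntegrable_iff_integrableOn_Ioc_of_le hη.2.le).mp hker).const_mul (Φ η)
    exact (integrableOn_Ioc_iff_integrableOn_Ioo).mp this
  -- value of inner t-integral
  have hslice_val : ∀ η ∈ Ioo (0:ℝ) z,
      (∫ t, F (η, t) ∂μ) = Φ η * ((z - η) ^ p / p) := by
    intro η hη
    have hind : (fun t => F (η, t))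
        = (Ioi η).indicator (fun t => Φ η * (t - η) ^ (p-1)) := by
      funext t; simp [hF, Set.indicator_apply, Set.mem_Ioi]
    rw [hind, hμ]
    rw [MeasureTheory.setIntegral_indicator measurableSet_Ioi]
    have hset : Ioo 0 z ∩ Ioi η = Ioo η z := by
      rw [Set.Ioo_inter_Ioi, max_eq_right hη.1.le]
    rw [hset, ← integral_Ioc_eq_integral_Ioo, ← intervalIntegral.integral_of_le hη.2.le]
    rw [intervalIntegral.integral_const_mul]
    congr 1
    have h := intervalIntegral.integral_comp_sub_right (fun u : ℝ => u ^ (p-1)) η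
      (a := η) (b := z)
    have e1 : η - η = (0:ℝ) := by ring
    rw [e1] at h
    rw [h, integral_rpow (Or.inl hp1)]
    have e2 : p - 1 + 1 = p := by ring
    rw [e2, Real.zero_rpow hp.ne']
    ring
  have hnorm : ∀ pt : ℝ × ℝ, ‖F pt‖ = F pt := fun pt => Real.norm_of_nonneg (hFnn pt)
  -- integrability of the dominating marginal
  have hmarg : Integrable (fun η => Φ η * ((z - η) ^ p / p)) μ := by
    have h1 : IntervalIntegrable (fun η => Φ η * (z - η) ^ p) volume 0 z :=
      phi_int hκ (by linarith) hz hΦm hΦnn hb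
    have h2 := (intervalIntegrable_iff_integrableOn_Ioc_of_le hz.le).mp h1
    have h3 : IntegrableOn (fun η => Φ η * (z - η) ^ p) (Ioo 0 z) volume :=
      (integrableOn_Ioc_iff_integrableOn_Ioo).mp h2
    have h4 := h3.div_const p
    have he : (fun η => Φ η * ((z - η) ^ p / p)) = fun η => Φ η * (z - η) ^ p / p := by
      funext η; ring
    rw [hμ, he]; exact h4
  -- product integrability
  have hprod : Integrable F (μ.prod μ) := by
    refine (MeasureTheory.integrable_prod_iff hFm.aestronglyMeasurable).2 ⟨?_, ?_⟩
    · filter_upwards [ae_restrict_mem measurableSet_Ioo] with η hη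
      exact hslice_int η hη
    · refine hmarg.congr ?_
      filter_upwards [ae_restrict_mem measurableSet_Ioo] with η hη
      simp_rw [hnorm]
      exact (hslice_val η hη).symm
  -- swap
  have hswap : (∫ η, ∫ t, F (η, t) ∂μ ∂μ) = ∫ t, ∫ η, F (η, t) ∂μ ∂μ :=
    MeasureTheory.integral_integral_swap (f := fun η t => F (η, t)) hprod
  -- identify LHS
  have hL : (∫ η, ∫ t, F (η, t) ∂μ ∂μ)
      = (∫ η in (0:ℝ)..z, Φ η * (z - η) ^ p) / p := by
    have h1 : (∫ η, ∫ t, F (η, t) ∂μ ∂μ) = ∫ η, Φ η * ((z - η) ^ p / p) ∂μ := by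
      refine integral_congr_ae ?_
      filter_upwards [ae_restrict_mem measurableSet_Ioo] with η hη
      exact hslice_val η hη
    rw [h1, hμ]
    rw [show (fun η => Φ η * ((z - η) ^ p / p)) = fun η => Φ η * (z - η) ^ p / p from
      by funext η; ring]
    rw [MeasureTheory.integral_div, ← integral_Ioc_eq_integral_Ioo,
      ← intervalIntegral.integral_of_le hz.le]
  -- identify RHS slices
  have hRin : ∀ t ∈ Ioo (0:ℝ) z,
      (∫ η, F (η, t) ∂μ) = ∫ η in (0:ℝ)..t, Φ η * (t - η) ^ (p-1) := by
    intro t ht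
    have hind : (fun η => F (η, t))
        = (Iio t).indicator (fun η => Φ η * (t - η) ^ (p-1)) := by
      funext η; simp [hF, Set.indicator_apply, Set.mem_Iio]
    rw [hind, hμ, MeasureTheory.setIntegral_indicator measurableSet_Iio,
      Set.Ioo_inter_Iio, min_eq_right ht.2.le, ← integral_Ioc_eq_integral_Ioo,
      ← intervalIntegral.integral_of_le ht.1.le]
  have hR : (∫ t, ∫ η, F (η, t) ∂μ ∂μ)
      = ∫ t in (0:ℝ)..z, ∫ η in (0:ℝ)..t, Φ η * (t - η) ^ (p-1) := by
    rw [hμ, intervalIntegral.integral_of_le hz.le, integral_Ioc_eq_integral_Ioo]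
    exact setIntegral_congr_fun measurableSet_Ioo (fun t ht => hRin t ht)
  constructor
  · have hint := hprod.integral_prod_right
    have hint2 : IntegrableOn (fun t => ∫ η in (0:ℝ)..t, Φ η * (t - η) ^ (p-1))
        (Ioo 0 z) volume := by
      refine (hint.congr ?_ : Integrable _ μ)
      filter_upwards [ae_restrict_mem measurableSet_Ioo] with t ht
      exact hRin t ht
    rw [intervalIntegrable_iff_integrableOn_Ioc_of_le hz.le,
      integrableOn_Ioc_iff_integrableOn_Ioo]
    exact hint2
  · rw [← hR, ← hswap, hL]
    field_simp

theorem stmt12 (l κ cl : ℝ) (hl : -1/2 < l) (hκ : -1 < κ) (hcl : 0 < cl)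
    (Φ : ℝ → ℝ) (hΦm : Measurable Φ) (hΦnn : ∀ η, 0 ≤ Φ η)
    (hΦ0 : ∀ η < (0:ℝ), Φ η = 0)
    (hΦK : ∀ K : Set ℝ, IsCompact K → ∃ C > (0:ℝ), ∀ η ∈ K, 0 < η → Φ η ≤ C * η ^ κ)
    (g : ℝ → ℝ)
    (hg : ∀ z > (0:ℝ), g z = cl * ∫ η in (0:ℝ)..z, Φ η * (z - η) ^ (l + 1/2))
    (hgz : ∀ z ≤ (0:ℝ), g z = 0) :
    Continuous g ∧
    (∀ z > (0:ℝ), HasDerivAt g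
      ((l + 1/2) * cl * ∫ η in (0:ℝ)..z, Φ η * (z - η) ^ (l - 1/2)) z) ∧
    ContinuousOn (deriv g) (Ioi 0) ∧
    (κ + l + 1/2 > 0 → ContDiff ℝ 1 g) := by
  have hp : (0:ℝ) < l + 1/2 := by linarith
  have hq : (-1:ℝ) < l - 1/2 := by linarith
  have hp' : (-1:ℝ) < l + 1/2 := by linarith
  set Hp : ℝ → ℝ := fun z => ∫ η in (0:ℝ)..z, Φ η * (z - η) ^ (l + 1/2) with hHp
  set Hq : ℝ → ℝ := fun z => ∫ η in (0:ℝ)..z, Φ η * (z - η) ^ (l - 1/2) with hHq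
  set D : ℝ → ℝ := fun z => (l + 1/2) * cl * Hq z with hD
  have hbound : ∀ b : ℝ, 0 < b → ∃ C > (0:ℝ), ∀ η ∈ Ioc (0:ℝ) b, Φ η ≤ C * η ^ κ := by
    intro b hb
    obtain ⟨C, hC, h⟩ := hΦK (Icc 0 b) isCompact_Icc
    exact ⟨C, hC, fun η hη => h η ⟨hη.1.le, hη.2⟩ hη.1⟩
  have hHqc : ∀ t : ℝ, 0 < t → ContinuousAt Hq t := fun t ht =>
    H_contAt hκ hq hΦm hΦnn hΦK ht
  have hHpc : ∀ t : ℝ, 0 < t → ContinuousAt Hp t := fun t ht =>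
    H_contAt hκ hp' hΦm hΦnn hΦK ht
  have hHqcOn : ContinuousOn Hq (Ioi 0) := fun t ht => (hHqc t ht).continuousWithinAt
  have hfub : ∀ z : ℝ, 0 < z → IntervalIntegrable Hq volume 0 z ∧
      Hp z = (l + 1/2) * ∫ t in (0:ℝ)..z, Hq t := by
    intro z hz
    obtain ⟨C, hC, hb⟩ := hbound z hz
    have h := H_fubini (p := l + 1/2) hκ hp hz hΦm hΦnn hC.le hb
    have hpq : l + 1/2 - 1 = l - 1/2 := by ring
    rw [hpq] at h
    exact h
  have hderiv : ∀ z : ℝ, 0 < z → HasDerivAt g (D z) z := by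
    intro z hz
    have hFTC : HasDerivAt (fun u => ∫ t in (0:ℝ)..u, Hq t) (Hq z) z :=
      intervalIntegral.integral_hasDerivAt_right (hfub z hz).1
        (ContinuousOn.stronglyMeasurableAtFilter isOpen_Ioi hHqcOn z hz)
        (hHqc z hz)
    have h2 : HasDerivAt (fun u => cl * ((l + 1/2) * ∫ t in (0:ℝ)..u, Hq t))
        (cl * ((l + 1/2) * Hq z)) z := (hFTC.const_mul _).const_mul cl
    have hev : g =ᶠ[𝓝 z] fun u => cl * ((l + 1/2) * ∫ t in (0:ℝ)..u, Hq t) := by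
      filter_upwards [isOpen_Ioi.mem_nhds hz] with u hu
      rw [hg u hu]
      exact congrArg (fun x => cl * x) (hfub u hu).2
    have h3 := h2.congr_of_eventuallyEq hev
    have he : D z = cl * ((l + 1/2) * Hq z) := by rw [hD]; ring
    rw [he]; exact h3
  have hHq0 : ∀ z : ℝ, z ≤ 0 → Hq z = 0 := by
    intro z hz
    show (∫ η in (0:ℝ)..z, Φ η * (z - η) ^ (l - 1/2)) = 0
    have hae : ∀ᵐ η : ℝ, η ∈ Set.uIoc (0:ℝ) z → Φ η * (z - η) ^ (l - 1/2) = 0 := by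
      have h0 : ∀ᵐ η : ℝ, η ≠ 0 := by
        rw [MeasureTheory.ae_iff]
        have he : {η : ℝ | ¬ η ≠ 0} = {0} := by ext x; simp
        rw [he]; exact measure_singleton 0
      filter_upwards [h0] with η hη0 hη
      rw [Set.uIoc_comm, Set.uIoc_of_le hz] at hη
      have : η < 0 := lt_of_le_of_ne hη.2 hη0
      rw [hΦ0 η this, zero_mul]
    calc (∫ η in (0:ℝ)..z, Φ η * (z - η) ^ (l - 1/2))
        = ∫ η in (0:ℝ)..z, (0:ℝ) := intervalIntegral.integral_congr_ae hae
      _ = 0 := intervalIntegral.integral_zero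
  have hD0 : ∀ z : ℝ, z ≤ 0 → D z = 0 := fun z hz => by show (l + 1/2) * cl * Hq z = 0; rw [hHq0 z hz]; ring
  have hg0 : g 0 = 0 := hgz 0 le_rfl
  have hgIoi : ∀ x : ℝ, 0 < x → ContinuousAt g x := by
    intro x hx
    have hev : g =ᶠ[𝓝 x] fun u => cl * Hp u := by
      filter_upwards [isOpen_Ioi.mem_nhds hx] with u hu; exact hg u hu
    exact ContinuousAt.congr (continuousAt_const.mul (hHpc x hx)) hev.symm
  have hgIio : ∀ x : ℝ, x < 0 → ContinuousAt g x := by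
    intro x hx
    refine ContinuousAt.congr (continuousAt_const (y := (0:ℝ))) ?_
    filter_upwards [isOpen_Iio.mem_nhds hx] with u hu
    exact (hgz u hu.le).symm
  have hg0c : ContinuousAt g 0 := by
    have hL : Tendsto g (𝓝[≤] (0:ℝ)) (𝓝 0) := by
      refine Tendsto.congr' ?_
        (tendsto_const_nhds : Tendsto (fun _ : ℝ => (0:ℝ)) (𝓝[≤] (0:ℝ)) (𝓝 0))
      filter_upwards [self_mem_nhdsWithin] with u hu
      exact (hgz u hu).symm
    have hR : Tendsto g (𝓝[>] (0:ℝ)) (𝓝 0) := by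
      have h1 : Tendsto (fun u => cl * Hp u) (𝓝[>] 0) (𝓝 (cl * 0)) :=
        (H_tendsto_zero hκ hp' (by linarith) hΦm hΦnn hΦK).const_mul cl
      rw [mul_zero] at h1
      refine Tendsto.congr' ?_ h1
      filter_upwards [self_mem_nhdsWithin] with u hu
      exact (hg u hu).symm
    have hT := Filter.tendsto_sup.2 ⟨hL, hR⟩
    rw [nhdsLE_sup_nhdsGT] at hT
    have : ContinuousAt g 0 ↔ Tendsto g (𝓝 0) (𝓝 0) := by rw [ContinuousAt, hg0]
    exact this.2 hT
  have hgcont : Continuous g := by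
    rw [continuous_iff_continuousAt]
    intro x
    rcases lt_trichotomy x 0 with h | h | h
    · exact hgIio x h
    · rw [h]; exact hg0c
    · exact hgIoi x h
  have hDcOn : ContinuousOn D (Ioi 0) := fun t ht =>
    ContinuousAt.continuousWithinAt (continuousAt_const.mul (hHqc t ht))
  refine ⟨hgcont, fun z hz => hderiv z hz, ?_, ?_⟩
  · refine ContinuousOn.congr hDcOn ?_
    intro z hz
    exact (hderiv z hz).deriv
  · intro hκl
    have hderivAll : ∀ z : ℝ, HasDerivAt g (D z) z := by
      intro z
      rcases lt_trichotomy z 0 with h | h | h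
      · have hev : g =ᶠ[𝓝 z] fun _ => (0:ℝ) := by
          filter_upwards [isOpen_Iio.mem_nhds h] with u hu; exact hgz u hu.le
        have h0 : HasDerivAt (fun _ : ℝ => (0:ℝ)) 0 z := hasDerivAt_const z 0
        rw [hD0 z h.le]
        exact h0.congr_of_eventuallyEq hev
      · subst h
        rw [hD0 0 le_rfl, hasDerivAt_iff_tendsto_slope,
          ← nhdsLT_sup_nhdsGT (0:ℝ), Filter.tendsto_sup]
        constructor
        · refine Tendsto.congr' ?_ tendsto_const_nhds
          filter_upwards [self_mem_nhdsWithin] with u hu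
          rw [slope_def_field, hg0, hgz u hu.le]
          simp
        · obtain ⟨C, hC, hCb⟩ := hbound 1 one_pos
          set B := ∫ s in (0:ℝ)..1, s ^ κ * (1 - s) ^ (l + 1/2) with hB
          have hup : Tendsto (fun u : ℝ => cl * C * B * u ^ (κ + l + 1/2))
              (𝓝[>] 0) (𝓝 0) := by
            have h1 : Tendsto (fun u : ℝ => u ^ (κ + l + 1/2)) (𝓝 0) (𝓝 0) := by
              have hc := (Real.continuousAt_rpow_const 0 (κ + l + 1/2) (Or.inr hκl.le)).tendsto
              rw [Real.zero_rpow (ne_of_gt hκl)] at hc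
              exact hc
            have h2 : Tendsto (fun u : ℝ => cl * C * B * u ^ (κ + l + 1/2))
                (𝓝 0) (𝓝 (cl * C * B * 0)) := h1.const_mul _
            rw [mul_zero] at h2
            exact h2.mono_left nhdsWithin_le_nhds
          refine tendsto_of_tendsto_of_tendsto_of_le_of_le' tendsto_const_nhds hup ?_ ?_
          · filter_upwards [self_mem_nhdsWithin] with u hu
            rw [slope_def_field, hg0, sub_zero, sub_zero]
            have hu0 : (0:ℝ) < u := hu
            have hgnn : 0 ≤ g u := by
              rw [hg u hu0]; exact mul_nonneg hcl.le (H_nonneg hu0.le hΦnn)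
            positivity
          · filter_upwards [Ioc_mem_nhdsGT_of_mem (by simp : (0:ℝ) ∈ Ico (0:ℝ) 1)]
              with u hu
            rw [slope_def_field, hg0, sub_zero, sub_zero]
            have hu0 : (0:ℝ) < u := hu.1
            have hle := H_le (q := l + 1/2) hκ hp' hu0 hΦm hΦnn hC.le
              (fun η hη => hCb η ⟨hη.1, hη.2.trans hu.2⟩)
            rw [hg u hu0]
            have h1 : cl * Hp u ≤ cl * (C * u ^ (κ + (l + 1/2) + 1) * B) := by
              exact mul_le_mul_of_nonneg_left hle hcl.le
            have h3 : cl * (C * u ^ (κ + (l + 1/2) + 1) * B) / u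
                = cl * C * B * u ^ (κ + l + 1/2) := by
              have he : κ + l + 1/2 = (κ + (l + 1/2) + 1) - 1 := by ring
              rw [he, Real.rpow_sub hu0, Real.rpow_one]
              ring
            rw [← h3]
            exact div_le_div_of_nonneg_right h1 hu0.le |>.trans_eq rfl
      · exact hderiv z h
    have hDcont : Continuous D := by
      rw [continuous_iff_continuousAt]
      intro x
      rcases lt_trichotomy x 0 with h | h | h
      · refine ContinuousAt.congr (continuousAt_const (y := (0:ℝ))) ?_
        filter_upwards [isOpen_Iio.mem_nhds h] with u hu
        exact (hD0 u hu.le).symm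
      · subst h
        have hL : Tendsto D (𝓝[≤] (0:ℝ)) (𝓝 0) := by
          refine Tendsto.congr' ?_
            (tendsto_const_nhds : Tendsto (fun _ : ℝ => (0:ℝ)) (𝓝[≤] (0:ℝ)) (𝓝 0))
          filter_upwards [self_mem_nhdsWithin] with u hu
          exact (hD0 u hu).symm
        have hR : Tendsto D (𝓝[>] (0:ℝ)) (𝓝 0) := by
          have h1 : Tendsto (fun u => ((l + 1/2) * cl) * Hq u) (𝓝[>] 0)
              (𝓝 (((l + 1/2) * cl) * 0)) :=
            (H_tendsto_zero hκ hq (by linarith) hΦm hΦnn hΦK).const_mul _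
          rw [mul_zero] at h1
          exact h1
        have hT := Filter.tendsto_sup.2 ⟨hL, hR⟩
        rw [nhdsLE_sup_nhdsGT] at hT
        have he : ContinuousAt D 0 ↔ Tendsto D (𝓝 0) (𝓝 0) := by
          rw [ContinuousAt, hD0 0 le_rfl]
        exact he.2 hT
      · exact continuousAt_const.mul (hHqc x h)
    have hdiff : Differentiable ℝ g := fun z => (hderivAll z).differentiableAt
    have hderiv_eq : deriv g = D := funext fun z => (hderivAll z).deriv
    rw [contDiff_one_iff_deriv]
    exact ⟨hdiff, by rw [hderiv_eq]; exact hDcont⟩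
end

section
/- Let g be continuous, increasing, with g = 0 on (-∞,0], g > 0 on (0,∞), satisfying g(z) ≥ c z^(n+l) for 0 < z < z* with 0 < n < 3 + l, l > -1/2. Let r̊ > 0, ẙ > 0, ẙ' < 0, and let y ∈ C¹([r̊,∞)) solve y'(r) = ẙ' r̊²/r² - m(r)/r² with y(r̊) = ẙ, where m(r) = 4π ∫_{r̊}^r s^(2+2l) g(y(s)) ds. Then y has a zero in (r̊, ∞). -/
open Real MeasureTheory Set Filter

/-- Helper: a positive multiple of `r ^ p` eventually dominates `B * r ^ q` when `q < p`. -/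
lemma helperBig19 (K A B p q r0 : ℝ) (hK : 0 < K) (hq : 0 ≤ q) (hpq : q < p) :
    ∃ r : ℝ, r0 ≤ r ∧ 0 < r ∧ B * r ^ q < K * (r ^ p - A) := by
  have hdiff : (0 : ℝ) < p - q := by linarith
  have h1 : Tendsto (fun r : ℝ => K * r ^ (p - q) + (-B - K * A)) atTop atTop :=
    tendsto_atTop_add_const_right atTop _ ((tendsto_rpow_atTop hdiff).const_mul_atTop hK)
  have h2 : Tendsto (fun r : ℝ => K * (r ^ p - A) - B * r ^ q) atTop atTop := by
    apply tendsto_atTop_mono' atTop _ h1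
    filter_upwards [eventually_ge_atTop (1 : ℝ),
      ((tendsto_rpow_atTop hdiff).const_mul_atTop hK).eventually_ge_atTop B] with r hr1 hrB
    have hr0 : (0 : ℝ) < r := by linarith
    have hrpq : r ^ q * r ^ (p - q) = r ^ p := by
      rw [← Real.rpow_add hr0]; ring_nf
    have hrq1 : (1 : ℝ) ≤ r ^ q := by
      calc (1 : ℝ) = 1 ^ q := (Real.one_rpow q).symm
        _ ≤ r ^ q := Real.rpow_le_rpow (by norm_num) hr1 hq
    have hBle : 0 ≤ K * r ^ (p - q) - B := by linarith
    have := mul_le_mul_of_nonneg_left hrq1 hBle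
    nlinarith [this, hrpq]
  obtain ⟨r, hr⟩ := ((h2.eventually_gt_atTop 0).and
    ((eventually_ge_atTop r0).and (eventually_gt_atTop (0 : ℝ)))).exists
  exact ⟨r, hr.2.1, hr.2.2, by linarith [hr.1]⟩

set_option maxHeartbeats 2000000 in
theorem stmt19 (l n c zstar : ℝ) (hl : -1/2 < l) (hn0 : 0 < n) (hn3 : n < 3 + l)
    (hc : 0 < c) (hzs : 0 < zstar)
    (g : ℝ → ℝ) (hgc : Continuous g) (hgmono : Monotone g)
    (hg0 : ∀ z ≤ (0:ℝ), g z = 0) (hgpos : ∀ z > (0:ℝ), 0 < g z)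
    (hgrow : ∀ z : ℝ, 0 < z → z < zstar → c * z ^ (n + l) ≤ g z)
    (ra ya ya' : ℝ) (hra : 0 < ra) (hya : 0 < ya) (hya' : ya' < 0)
    (y y' : ℝ → ℝ) (hy0 : y ra = ya)
    (hy : ∀ r ∈ Ici ra, HasDerivAt y (y' r) r)
    (hy'c : ContinuousOn y' (Ici ra))
    (heq : ∀ r ≥ ra, y' r = ya' * ra ^ 2 / r ^ 2
        - (4 * π * ∫ s in ra..r, s ^ (2 + 2*l) * g (y s)) / r ^ 2) :
    ∃ R : ℝ, ra < R ∧ y R = 0 := by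
  by_contra hcon
  push_neg at hcon
  have hπ : (0:ℝ) < π := Real.pi_pos
  have hgnn : ∀ z : ℝ, 0 ≤ g z := by
    intro z
    rcases le_or_gt z 0 with h | h
    · rw [hg0 z h]
    · exact (hgpos z h).le
  -- dispose of the degenerate case n + l ≤ 0 using continuity of g at 0
  rcases le_or_gt (n + l) 0 with hnl | hnl
  · have hε : 0 < c * zstar ^ (n + l) := mul_pos hc (Real.rpow_pos_of_pos hzs _)
    have hT : Tendsto g (nhdsWithin 0 (Ioi 0)) (nhds 0) := by
      have h := hgc.tendsto (0 : ℝ)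
      rw [hg0 0 le_rfl] at h
      exact h.mono_left nhdsWithin_le_nhds
    have hev : ∀ᶠ z in nhdsWithin 0 (Ioi 0), c * zstar ^ (n + l) ≤ g z := by
      filter_upwards [Ioo_mem_nhdsGT_of_mem (⟨le_rfl, hzs⟩ : (0:ℝ) ∈ Ico 0 zstar)] with z hz
      calc c * zstar ^ (n + l) ≤ c * z ^ (n + l) :=
            mul_le_mul_of_nonneg_left (Real.rpow_le_rpow_of_nonpos hz.1 hz.2.le hnl) hc.le
        _ ≤ g z := hgrow z hz.1 hz.2
    have := ge_of_tendsto hT hev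
    linarith
  -- basic exponent facts
  have h3l : (1:ℝ) < 3 + 2*l := by linarith
  have h2l : (-1:ℝ) < 2 + 2*l := by linarith
  -- y is continuous on [ra, ∞)
  have hyc : ContinuousOn y (Ici ra) := fun r hr => ((hy r hr).continuousAt).continuousWithinAt
  -- y is positive on [ra, ∞)
  have hpos : ∀ r, ra ≤ r → 0 < y r := by
    intro r hr
    by_contra hle
    push_neg at hle
    have hlt : ra < r := by
      rcases eq_or_lt_of_le hr with h | h
      · exfalso; rw [← h, hy0] at hle; linarith
      · exact h
    have h0mem : (0:ℝ) ∈ Icc (y r) (y ra) := ⟨hle, by rw [hy0]; exact hya.le⟩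
    obtain ⟨R, hR, hyR⟩ := intermediate_value_Icc' hlt.le (hyc.mono Icc_subset_Ici_self) h0mem
    have hraR : ra < R := by
      rcases eq_or_lt_of_le hR.1 with h | h
      · exfalso; rw [← h, hy0] at hyR; linarith
      · exact h
    exact hcon R hraR hyR
  -- the integrand
  set f : ℝ → ℝ := fun s => s ^ (2 + 2*l) * g (y s) with hf
  have hfc : ContinuousOn f (Ici ra) := by
    apply ContinuousOn.mul
    · exact continuousOn_id.rpow_const (fun x hx => Or.inl (ne_of_gt (lt_of_lt_of_le hra hx)))
    · exact hgc.comp_continuousOn hyc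
  have hsubI : ∀ r1 r : ℝ, ra ≤ r1 → ra ≤ r → uIcc r1 r ⊆ Ici ra := by
    intro r1 r h1 h2 x hx
    exact le_trans (le_min h1 h2) hx.1
  have hInt : ∀ r1 r : ℝ, ra ≤ r1 → ra ≤ r → IntervalIntegrable f volume r1 r :=
    fun r1 r h1 h2 => (hfc.mono (hsubI r1 r h1 h2)).intervalIntegrable
  set M : ℝ → ℝ := fun r => 4 * π * ∫ s in ra..r, f s with hM
  have hMra : M ra = 0 := by simp [hM]
  have hMsplit : ∀ r1 r : ℝ, ra ≤ r1 → r1 ≤ r → M r = M r1 + 4 * π * ∫ s in r1..r, f s := by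
    intro r1 r h1 h2
    have h := intervalIntegral.integral_add_adjacent_intervals (μ := volume) (f := f)
      (hInt ra r1 le_rfl h1) (hInt r1 r h1 (h1.trans h2))
    simp only [hM]
    rw [← h]; ring
  -- lower bound for M from a lower bound on g ∘ y
  have hMlow : ∀ (G r1 r : ℝ), ra ≤ r1 → r1 ≤ r → 0 ≤ G → (∀ s ∈ Icc r1 r, G ≤ g (y s)) →
      M r1 + 4 * π * G * ((r ^ (3 + 2*l) - r1 ^ (3 + 2*l)) / (3 + 2*l)) ≤ M r := by
    intro G r1 r h1 h2 hG hGle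
    have hr : ra ≤ r := h1.trans h2
    have hintG : IntervalIntegrable (fun s : ℝ => G * s ^ (2 + 2*l)) volume r1 r := by
      apply ContinuousOn.intervalIntegrable
      apply ContinuousOn.mul continuousOn_const
      exact continuousOn_id.rpow_const
        (fun x hx => Or.inl (ne_of_gt (lt_of_lt_of_le hra (hsubI r1 r h1 hr hx))))
    have hle : (∫ s in r1..r, G * s ^ (2 + 2*l)) ≤ ∫ s in r1..r, f s := by
      apply intervalIntegral.integral_mono_on h2 hintG (hInt r1 r h1 hr)
      intro x hx
      have hx0 : (0:ℝ) < x := lt_of_lt_of_le hra (le_trans h1 hx.1)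
      have hxe : (0:ℝ) ≤ x ^ (2 + 2*l) := Real.rpow_nonneg hx0.le _
      calc G * x ^ (2 + 2*l) ≤ g (y x) * x ^ (2 + 2*l) :=
            mul_le_mul_of_nonneg_right (hGle x hx) hxe
        _ = f x := by rw [hf]; ring
    have hval : (∫ s in r1..r, G * s ^ (2 + 2*l))
        = G * ((r ^ (3 + 2*l) - r1 ^ (3 + 2*l)) / (3 + 2*l)) := by
      rw [intervalIntegral.integral_const_mul]
      have h21 : (2 + 2*l) + 1 = 3 + 2*l := by ring
      rw [integral_rpow (Or.inl h2l), h21]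
    rw [hMsplit r1 r h1 h2]
    have h4π : (0:ℝ) ≤ 4 * π := by linarith
    nlinarith [hle, hval]
  have hMnonneg : ∀ r, ra ≤ r → 0 ≤ M r := by
    intro r hr
    have := hMlow 0 ra r le_rfl hr le_rfl (fun s _ => hgnn _)
    rw [hMra] at this
    nlinarith [this]
  have hMmono : ∀ r1 r, ra ≤ r1 → r1 ≤ r → M r1 ≤ M r := by
    intro r1 r h1 h2
    have := hMlow 0 r1 r h1 h2 le_rfl (fun s _ => hgnn _)
    nlinarith [this]
  -- the fundamental decay estimate
  have hstep : ∀ r1 r : ℝ, ra ≤ r1 → r1 ≤ r → y r ≤ y r1 - M r1 * (r1⁻¹ - r⁻¹) := by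
    intro r1 r h1 h2
    have hsub := hsubI r1 r h1 (h1.trans h2)
    have hftc : (∫ s in r1..r, y' s) = y r - y r1 :=
      intervalIntegral.integral_eq_sub_of_hasDerivAt (fun x hx => hy x (hsub hx))
        ((hy'c.mono hsub).intervalIntegrable)
    have hinv : (∫ s in r1..r, -(M r1) * (s^2)⁻¹) = -(M r1) * (r1⁻¹ - r⁻¹) := by
      rw [intervalIntegral.integral_const_mul]
      have hI : (∫ s in r1..r, (s^2)⁻¹) = (fun x : ℝ => -x⁻¹) r - (fun x : ℝ => -x⁻¹) r1 := by
        apply intervalIntegral.integral_eq_sub_of_hasDerivAt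
        · intro x hx
          have hx0 : x ≠ 0 := ne_of_gt (lt_of_lt_of_le hra (hsub hx))
          have hd := (hasDerivAt_inv hx0).neg
          rw [neg_neg] at hd
          exact hd
        · apply ContinuousOn.intervalIntegrable
          apply ContinuousOn.inv₀ ((continuous_pow 2).continuousOn)
          intro x hx
          exact pow_ne_zero 2 (ne_of_gt (lt_of_lt_of_le hra (hsub hx)))
      rw [hI]; ring
    have hintInv : IntervalIntegrable (fun s : ℝ => -(M r1) * (s^2)⁻¹) volume r1 r := by
      apply ContinuousOn.intervalIntegrable
      apply ContinuousOn.mul continuousOn_const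
      apply ContinuousOn.inv₀ ((continuous_pow 2).continuousOn)
      intro x hx
      exact pow_ne_zero 2 (ne_of_gt (lt_of_lt_of_le hra (hsub hx)))
    have hmono : (∫ s in r1..r, y' s) ≤ ∫ s in r1..r, -(M r1) * (s^2)⁻¹ := by
      apply intervalIntegral.integral_mono_on h2 ((hy'c.mono hsub).intervalIntegrable) hintInv
      intro x hx
      have hxra : ra ≤ x := le_trans h1 hx.1
      have hx0 : (0:ℝ) < x := lt_of_lt_of_le hra hxra
      have hx2 : (0:ℝ) < x ^ 2 := by positivity
      have hMx : M r1 ≤ M x := hMmono r1 x h1 hx.1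
      have hyaneg : ya' * ra ^ 2 ≤ 0 := mul_nonpos_of_nonpos_of_nonneg hya'.le (sq_nonneg ra)
      have hform : y' x = ya' * ra ^ 2 / x ^ 2 - M x / x ^ 2 := by
        rw [heq x hxra]
      rw [hform]
      have hexp : ya' * ra ^ 2 / x ^ 2 - M x / x ^ 2 = (ya' * ra ^ 2 - M x) * (x ^ 2)⁻¹ := by
        ring
      rw [hexp]
      apply mul_le_mul_of_nonneg_right _ (inv_nonneg.2 hx2.le)
      linarith
    rw [hftc, hinv] at hmono
    linarith
  have hyle : ∀ r, ra ≤ r → y r ≤ ya := by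
    intro r hr
    have := hstep ra r le_rfl hr
    rw [hMra, hy0] at this
    linarith
  have hanti : ∀ r1 r, ra ≤ r1 → r1 ≤ r → y r ≤ y r1 := by
    intro r1 r h1 h2
    have h10 : 0 < r1 := lt_of_lt_of_le hra h1
    have hr0 : 0 < r := lt_of_lt_of_le h10 h2
    have hle : r⁻¹ ≤ r1⁻¹ := by
      apply inv_anti₀ h10 h2
    have := hstep r1 r h1 h2
    nlinarith [hMnonneg r1 h1]
  -- the key inequality M r ≤ y r * r
  have hkey : ∀ r1, ra ≤ r1 → M r1 ≤ y r1 * r1 := by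
    intro r1 h1
    have hr10 : 0 < r1 := lt_of_lt_of_le hra h1
    have hT : Tendsto (fun r : ℝ => y r1 - M r1 * (r1⁻¹ - r⁻¹)) atTop
        (nhds (y r1 - M r1 * (r1⁻¹ - 0))) :=
      tendsto_const_nhds.sub ((tendsto_const_nhds.sub tendsto_inv_atTop_zero).const_mul _)
    have hev : ∀ᶠ r in atTop, (0:ℝ) ≤ y r1 - M r1 * (r1⁻¹ - r⁻¹) := by
      filter_upwards [eventually_ge_atTop r1] with r hr
      have h1' := hstep r1 r h1 hr
      have h2' := hpos r (h1.trans hr)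
      linarith
    have hg := ge_of_tendsto hT hev
    rw [sub_zero] at hg
    have h2 : M r1 * r1⁻¹ ≤ y r1 := by linarith
    calc M r1 = M r1 * r1⁻¹ * r1 := by field_simp
      _ ≤ y r1 * r1 := mul_le_mul_of_nonneg_right h2 hr10.le
  -- Case split: y stays above zstar forever, or drops below it
  by_cases hall : ∀ r, ra ≤ r → zstar ≤ y r
  · -- Case B : g (y s) ≥ g zstar > 0, so M grows superlinearly
    have hG : 0 < g zstar := hgpos zstar hzs
    obtain ⟨r, hrra, hr0, hbig⟩ := helperBig19 (4 * π * g zstar / (3 + 2*l)) (ra ^ (3 + 2*l))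
      ya (3 + 2*l) 1 ra (div_pos (mul_pos (by positivity : (0:ℝ) < 4 * π) hG) (by linarith)) zero_le_one h3l
    rw [Real.rpow_one] at hbig
    have h1 := hMlow (g zstar) ra r le_rfl hrra hG.le (fun s hs => hgmono (hall s hs.1))
    rw [hMra] at h1
    have h2 := hkey r hrra
    have h3 := hyle r hrra
    have h4 : y r * r ≤ ya * r := mul_le_mul_of_nonneg_right h3 hr0.le
    have heqK : 4 * π * g zstar / (3 + 2*l) * (r ^ (3 + 2*l) - ra ^ (3 + 2*l))
        = 4 * π * g zstar * ((r ^ (3 + 2*l) - ra ^ (3 + 2*l)) / (3 + 2*l)) := by ring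
    linarith [hbig, h1, h2, h4, heqK.le, heqK.ge]
  · -- Case C : y drops below zstar at some r2
    push_neg at hall
    obtain ⟨r2, hr2ra, hr2z⟩ := hall
    have hr20 : 0 < r2 := lt_of_lt_of_le hra hr2ra
    have hylt : ∀ s, r2 ≤ s → y s < zstar :=
      fun s hs => lt_of_le_of_lt (hanti r2 s hr2ra hs) hr2z
    -- the main pointwise inequality (✦)
    have hstar : ∀ r, r2 ≤ r →
        4 * π * (c * (y r) ^ (n + l)) * ((r ^ (3 + 2*l) - r2 ^ (3 + 2*l)) / (3 + 2*l))
          ≤ y r * r := by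
      intro r hr
      have hrra : ra ≤ r := hr2ra.trans hr
      have hyr : 0 < y r := hpos r hrra
      have hGle : ∀ s ∈ Icc r2 r, c * (y r) ^ (n + l) ≤ g (y s) := by
        intro s hs
        have hsra : ra ≤ s := hr2ra.trans hs.1
        have hys : 0 < y s := hpos s hsra
        have hyrs : y r ≤ y s := hanti s r hsra hs.2
        calc c * (y r) ^ (n + l) ≤ c * (y s) ^ (n + l) :=
              mul_le_mul_of_nonneg_left (Real.rpow_le_rpow hyr.le hyrs hnl.le) hc.le
          _ ≤ g (y s) := hgrow (y s) hys (hylt s hs.1)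
      have hGnn : 0 ≤ c * (y r) ^ (n + l) :=
        mul_nonneg hc.le (Real.rpow_nonneg hyr.le _)
      have h1 := hMlow (c * (y r) ^ (n + l)) r2 r hr2ra hr hGnn hGle
      have h2 := hMnonneg r2 hr2ra
      have h3 := hkey r hrra
      linarith
    rcases le_or_gt (n + l) 1 with hnl1 | hnl1
    · -- Subcase C1 : n + l ≤ 1
      set B0 : ℝ := max 1 zstar with hB0
      have hB0pos : (0:ℝ) < B0 := lt_of_lt_of_le one_pos (le_max_left _ _)
      obtain ⟨r, hrr2, hr0, hbig⟩ := helperBig19 (4 * π * c / (3 + 2*l)) (r2 ^ (3 + 2*l))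
        B0 (3 + 2*l) 1 r2 (div_pos (mul_pos (by positivity : (0:ℝ) < 4 * π) hc) (by linarith)) zero_le_one h3l
      rw [Real.rpow_one] at hbig
      have hyr : 0 < y r := hpos r (hr2ra.trans hrr2)
      have hyrz : y r < zstar := hylt r hrr2
      -- y r ≤ (y r)^(n+l) * B0
      have hybound : y r ≤ (y r) ^ (n + l) * B0 := by
        rcases le_or_gt (y r) 1 with hle1 | hgt1
        · have h4 : y r ≤ (y r) ^ (n + l) := by
            calc y r = (y r) ^ (1:ℝ) := (Real.rpow_one _).symm
              _ ≤ (y r) ^ (n + l) := Real.rpow_le_rpow_of_exponent_ge hyr hle1 hnl1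
          have h3 : (1:ℝ) ≤ B0 := le_max_left _ _
          have h5 := mul_le_mul_of_nonneg_left h3 (Real.rpow_nonneg hyr.le (n + l))
          nlinarith [h4, h5]
        · have h1 : (1:ℝ) ≤ (y r) ^ (n + l) := by
            calc (1:ℝ) = 1 ^ (n + l) := (Real.one_rpow _).symm
              _ ≤ (y r) ^ (n + l) := Real.rpow_le_rpow (by norm_num) hgt1.le hnl.le
          have h3 : zstar ≤ B0 := le_max_right _ _
          have h5 := mul_le_mul_of_nonneg_right h1 (le_of_lt hB0pos)
          rw [one_mul] at h5
          nlinarith [h5]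
      have hs := hstar r hrr2
      -- from hs and hybound : Q * t * E ≤ t * B0 * r with t = (y r)^(n+l)
      have ht : (0:ℝ) < (y r) ^ (n + l) := Real.rpow_pos_of_pos hyr _
      -- multiply hbig by t
      have hchain : 4 * π * c / (3 + 2*l) * (r ^ (3 + 2*l) - r2 ^ (3 + 2*l)) * ((y r) ^ (n + l))
          ≤ B0 * r * ((y r) ^ (n + l)) := by
        have e1 : 4 * π * c / (3 + 2*l) * (r ^ (3 + 2*l) - r2 ^ (3 + 2*l)) * ((y r) ^ (n + l))
            = 4 * π * (c * (y r) ^ (n + l)) * ((r ^ (3 + 2*l) - r2 ^ (3 + 2*l)) / (3 + 2*l)) := by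
          ring
        have e2 : y r * r ≤ B0 * r * ((y r) ^ (n + l)) := by
          calc y r * r ≤ ((y r) ^ (n + l) * B0) * r := mul_le_mul_of_nonneg_right hybound hr0.le
            _ = B0 * r * ((y r) ^ (n + l)) := by ring
        rw [e1]
        exact le_trans hs e2
      have := (mul_lt_mul_iff_left₀ ht).2 hbig
      linarith [hchain, this]
    · -- Subcase C2 : n + l > 1
      set r3 : ℝ := r2 + 1 with hr3
      have hr32 : r2 ≤ r3 := by linarith
      have hr3ra : ra ≤ r3 := hr2ra.trans hr32
      have hm3 : 0 < M r3 := by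
        have hsplit := hMsplit r2 r3 hr2ra hr32
        have hpos' : 0 < ∫ s in r2..r3, f s := by
          apply intervalIntegral.intervalIntegral_pos_of_pos_on (hInt r2 r3 hr2ra hr3ra)
          · intro x hx
            have hxra : ra ≤ x := le_trans hr2ra hx.1.le
            have hx0 : 0 < x := lt_of_lt_of_le hra hxra
            exact mul_pos (Real.rpow_pos_of_pos hx0 _) (hgpos _ (hpos x hxra))
          · linarith
        have h4 : 0 < 4 * π * ∫ s in r2..r3, f s :=
          mul_pos (by positivity : (0:ℝ) < 4 * π) hpos'
        have := hMnonneg r2 hr2ra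
        linarith
      set q : ℝ := n + l - 1 with hqdef
      have hq0 : 0 < q := by simp only [hqdef]; linarith
      set Q : ℝ := 4 * π * c / (3 + 2*l) with hQ
      have hQ0 : 0 < Q := div_pos (mul_pos (by positivity : (0:ℝ) < 4 * π) hc) (by linarith)
      set K2 : ℝ := Q * (M r3) ^ q with hK2
      have hK20 : 0 < K2 := mul_pos hQ0 (Real.rpow_pos_of_pos hm3 _)
      obtain ⟨r, hrr3, hr0, hbig⟩ := helperBig19 K2 (r2 ^ (3 + 2*l)) 1 (3 + 2*l) (n + l) r3
        hK20 hnl.le (by linarith)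
      rw [one_mul] at hbig
      have hrr2 : r2 ≤ r := hr32.trans hrr3
      have hrra : ra ≤ r := hr2ra.trans hrr2
      have hyr : 0 < y r := hpos r hrra
      -- lower bound on y r from M r3
      have hylb : M r3 / r ≤ y r := by
        have h1 : M r3 ≤ M r := hMmono r3 r hr3ra hrr3
        have h2 := hkey r hrra
        rw [div_le_iff₀ hr0]
        linarith
      -- E ≥ 0
      have hE : 0 ≤ r ^ (3 + 2*l) - r2 ^ (3 + 2*l) := by
        have := Real.rpow_le_rpow hr20.le hrr2 (by linarith : (0:ℝ) ≤ 3 + 2*l)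
        linarith
      have hs := hstar r hrr2
      -- rewrite (y r)^(n+l) = (y r)^q * (y r)
      have hsplit : (y r) ^ (n + l) = (y r) ^ q * y r := by
        have e : n + l = q + 1 := by simp only [hqdef]; ring
        rw [e, Real.rpow_add_one hyr.ne']
      -- lower bound (y r)^q ≥ (M r3)^q / r^q
      have hqb : (M r3) ^ q / r ^ q ≤ (y r) ^ q := by
        have h1 : (M r3 / r) ^ q ≤ (y r) ^ q :=
          Real.rpow_le_rpow (le_of_lt (div_pos hm3 hr0)) hylb hq0.le
        rwa [Real.div_rpow hm3.le hr0.le] at h1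
      -- combine: Q * ((M r3)^q / r^q) * (y r) * E ≤ y r * r
      have hcomb : Q * ((M r3) ^ q / r ^ q) * y r * (r ^ (3 + 2*l) - r2 ^ (3 + 2*l))
          ≤ y r * r := by
        have e1 : 4 * π * (c * (y r) ^ (n + l)) * ((r ^ (3 + 2*l) - r2 ^ (3 + 2*l)) / (3 + 2*l))
            = Q * ((y r) ^ q * y r) * (r ^ (3 + 2*l) - r2 ^ (3 + 2*l)) := by
          rw [← hsplit]; simp only [hQ]; ring
        rw [e1] at hs
        have h2 : Q * ((M r3) ^ q / r ^ q) * y r * (r ^ (3 + 2*l) - r2 ^ (3 + 2*l))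
            ≤ Q * ((y r) ^ q * y r) * (r ^ (3 + 2*l) - r2 ^ (3 + 2*l)) := by
          apply mul_le_mul_of_nonneg_right _ hE
          have := mul_le_mul_of_nonneg_right hqb hyr.le
          nlinarith
        exact le_trans h2 hs
      -- cancel y r, multiply by r^q
      have hrq : (0:ℝ) < r ^ q := Real.rpow_pos_of_pos hr0 _
      have hcancel : Q * ((M r3) ^ q / r ^ q) * (r ^ (3 + 2*l) - r2 ^ (3 + 2*l)) ≤ r := by
        have := hcomb
        have e : Q * ((M r3) ^ q / r ^ q) * y r * (r ^ (3 + 2*l) - r2 ^ (3 + 2*l))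
            = (Q * ((M r3) ^ q / r ^ q) * (r ^ (3 + 2*l) - r2 ^ (3 + 2*l))) * y r := by ring
        rw [e] at this
        have e2 : y r * r = r * y r := by ring
        rw [e2] at this
        exact le_of_mul_le_mul_right this hyr
      have hfinal : K2 * (r ^ (3 + 2*l) - r2 ^ (3 + 2*l)) ≤ r ^ (n + l) := by
        have h1 := mul_le_mul_of_nonneg_right hcancel hrq.le
        have e1 : Q * ((M r3) ^ q / r ^ q) * (r ^ (3 + 2*l) - r2 ^ (3 + 2*l)) * r ^ q
            = K2 * (r ^ (3 + 2*l) - r2 ^ (3 + 2*l)) * (r ^ q / r ^ q) := by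
          simp only [hK2]; ring
        have e2 : r ^ q / r ^ q = 1 := div_self hrq.ne'
        rw [e1, e2, mul_one] at h1
        have e3 : r * r ^ q = r ^ (n + l) := by
          have e : n + l = q + 1 := by simp only [hqdef]; ring
          rw [e, Real.rpow_add_one hr0.ne']
          ring
        rw [e3] at h1
        exact h1
      linarith
end
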